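/- arXiv:2001.02797 — 2 statements merged into one kernel-verified Lean document; each statement's English description precedes it below -/
import Mathlib

section
/- Let Γⁿ be a sequence of Bernoulli congestion games satisfying |Nⁿ| → ∞, rⁿ = max_i rⁿ_i → 0, and dⁿ_t = ∑_{i: tⁿ_i = t} rⁿ_i → d_t, and let σⁿ be any sequence of mixed strategy profiles with expected flows yⁿ_{t,s} → y_{t,s}. Then the random strategy flows Yⁿ_{t,s} = ∑_{i: tⁿ_i = t} Uⁿ_i 1{Sⁿ_i = s} converge in total variation to Poisson(y_{t,s}) random variables, and the limit variables (Y_{t,s}) over all types and strategies are mutually independent. -/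
open scoped BigOperators Classical
open Filter Topology

noncomputable def poiPMF (x : ℝ) (k : ℕ) : ℝ := Real.exp (-x) * x ^ k / (Nat.factorial k)

section Defs

variable {E T N : Type*}

/-- Expectation under the product measure of a Bernoulli congestion game: each player `i` is
active independently with probability `r i`, and independently draws a pure strategy according
to the mixed strategy `σ i`. -/
noncomputable def bexpVal [Fintype E] [Fintype N] (r : N → ℝ) (σ : N → Finset E → ℝ)
    (g : (N → Bool) → (N → Finset E) → ℝ) : ℝ :=
  ∑ u : N → Bool, ∑ a : N → Finset E,
    (∏ i, (if u i then r i else 1 - r i) * σ i (a i)) * g u a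

/-- The random strategy flow `Y_{t,s} = ∑_{i : t_i = t} U_i 1{S_i = s}` of a Bernoulli
congestion game. -/
noncomputable def bflow [Fintype E] [Fintype N] (tm : N → T) (t : T) (s : Finset E)
    (u : N → Bool) (a : N → Finset E) : ℕ :=
  ∑ i, if tm i = t ∧ u i ∧ a i = s then 1 else 0

def IsMixed [Fintype E] (strat : T → Finset (Finset E)) (tm : N → T)
    (σ : N → Finset E → ℝ) : Prop :=
  (∀ i s, 0 ≤ σ i s) ∧ (∀ i s, s ∉ strat (tm i) → σ i s = 0) ∧
  (∀ i, ∑ s ∈ strat (tm i), σ i s = 1)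

end Defs

namespace PLA

open ENNReal
open scoped NNReal

variable {M : Type*} [AddCommMonoid M]

noncomputable def δ0 {M : Type*} [AddCommMonoid M] : M → ℝ≥0∞ := fun k => if k = 0 then 1 else 0

noncomputable def conv2 {M : Type*} [AddCommMonoid M] (f g : M → ℝ≥0∞) : M → ℝ≥0∞ :=
  fun k => ∑' p : M × M, if p.1 + p.2 = k then f p.1 * g p.2 else 0

noncomputable def bigConv {M : Type*} [AddCommMonoid M] {N : Type*} [Fintype N]
    (q : N → M → ℝ≥0∞) : M → ℝ≥0∞ :=
  fun k => ∑' m : N → M, if (∑ i, m i) = k then ∏ i, q i (m i) else 0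

noncomputable def dL1 {X : Type*} (f g : X → ℝ≥0∞) : ℝ≥0∞ :=
  ∑' k, ((f k - g k) + (g k - f k))

lemma dL1_comm {X : Type*} (f g : X → ℝ≥0∞) : dL1 f g = dL1 g f :=
  tsum_congr fun k => add_comm _ _

lemma le_dL1 {X : Type*} (f g : X → ℝ≥0∞) (k : X) :
    (f k - g k) + (g k - f k) ≤ dL1 f g := ENNReal.le_tsum k

lemma dL1_self {X : Type*} (f : X → ℝ≥0∞) : dL1 f f = 0 := by
  simp [dL1]

lemma dL1_triangle {X : Type*} (f g h : X → ℝ≥0∞) : dL1 f h ≤ dL1 f g + dL1 g h := by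
  unfold dL1
  rw [← ENNReal.tsum_add]
  refine ENNReal.tsum_le_tsum fun k => ?_
  have key : ∀ a b c : ℝ≥0∞, a - c ≤ (a - b) + (b - c) := by
    intro a b c
    rw [tsub_le_iff_right]
    calc a ≤ (a - b) + b := le_tsub_add
      _ ≤ (a - b) + ((b - c) + c) := by gcongr; exact le_tsub_add
      _ = (a - b) + (b - c) + c := (add_assoc _ _ _).symm
  calc (f k - h k) + (h k - f k)
      ≤ ((f k - g k) + (g k - h k)) + ((h k - g k) + (g k - f k)) :=
        add_le_add (key _ _ _) (key _ _ _)
    _ = (f k - g k + (g k - f k)) + (g k - h k + (h k - g k)) := by ring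

lemma tsum_tsub_le {X : Type*} (f g : X → ℝ≥0∞) :
    (∑' x, f x) - (∑' x, g x) ≤ ∑' x, (f x - g x) := by
  rw [tsub_le_iff_right, ← ENNReal.tsum_add]
  exact ENNReal.tsum_le_tsum fun x => le_tsub_add

lemma tsum_tsub_eq_of {X : Type*} {f g : X → ℝ≥0∞}
    (hf : ∑' x, f x = 1) (hg : ∑' x, g x = 1) :
    ∑' x, (f x - g x) = ∑' x, (g x - f x) := by
  have key : ∀ (u v : X → ℝ≥0∞) (x : X), (u x - v x) + (u x ⊓ v x) = u x := by
    intro u v x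
    rcases le_total (u x) (v x) with h | h
    · simp [tsub_eq_zero_of_le h, inf_eq_left.2 h]
    · rw [inf_eq_right.2 h]; exact tsub_add_cancel_of_le h
  have h1 : (∑' x, (f x - g x)) + ∑' x, (f x ⊓ g x) = 1 := by
    rw [← ENNReal.tsum_add]; simp_rw [key f g]; exact hf
  have h2 : (∑' x, (g x - f x)) + ∑' x, (f x ⊓ g x) = 1 := by
    rw [← ENNReal.tsum_add]
    have : ∀ x, (g x - f x) + (f x ⊓ g x) = g x := by
      intro x; rw [inf_comm]; exact key g f x
    simp_rw [this]; exact hg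
  have hfin : (∑' x, (f x ⊓ g x)) ≠ ⊤ := by
    refine ne_top_of_le_ne_top (by simp : (1:ℝ≥0∞) ≠ ⊤) ?_
    rw [← hf]; exact ENNReal.tsum_le_tsum fun x => inf_le_left
  have := h1.trans h2.symm
  rw [add_comm _ (∑' x, (f x ⊓ g x)), add_comm _ (∑' x, (f x ⊓ g x))] at this
  exact (ENNReal.add_right_inj hfin).1 this

lemma dL1_eq_two_tsub {X : Type*} {f g : X → ℝ≥0∞}
    (hf : ∑' x, f x = 1) (hg : ∑' x, g x = 1) :
    dL1 f g = 2 * ∑' x, (f x - g x) := by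
  unfold dL1
  rw [ENNReal.tsum_add, ← tsum_tsub_eq_of hf hg, two_mul]

lemma dL1_le_two {X : Type*} {f g : X → ℝ≥0∞}
    (hf : ∑' x, f x ≤ 1) (hg : ∑' x, g x ≤ 1) : dL1 f g ≤ 2 := by
  unfold dL1
  calc ∑' k, ((f k - g k) + (g k - f k)) ≤ ∑' k, (f k + g k) := by
        refine ENNReal.tsum_le_tsum fun k => add_le_add (tsub_le_self) (tsub_le_self)
    _ = (∑' k, f k) + ∑' k, g k := ENNReal.tsum_add
    _ ≤ 1 + 1 := add_le_add hf hg
    _ = 2 := one_add_one_eq_two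

lemma dL1_comp_equiv {X Y : Type*} (e : X ≃ Y) (f g : Y → ℝ≥0∞) :
    dL1 (fun x => f (e x)) (fun x => g (e x)) = dL1 f g := by
  unfold dL1
  exact e.tsum_eq fun k => (f k - g k) + (g k - f k)

/-- Fubini for finite products of sums. -/
lemma piFubini_fin {M' : Type*} :
    ∀ n (f : Fin n → M' → ℝ≥0∞),
      (∑' g : Fin n → M', ∏ i, f i (g i)) = ∏ i, ∑' x, f i x := by
  intro n
  induction n with
  | zero =>
    intro f
    haveI : Unique (Fin 0 → M') := ⟨⟨fun i => i.elim0⟩, fun f => funext fun i => i.elim0⟩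
    rw [tsum_eq_single (default : Fin 0 → M')
      (fun b hb => absurd (Subsingleton.elim b default) hb)]
    simp
  | succ n ih =>
    intro f
    calc (∑' g : Fin (n+1) → M', ∏ i, f i (g i))
        = ∑' p : M' × (Fin n → M'), ∏ i, f i ((Fin.consEquiv (fun _ => M')) p i) :=
          (Equiv.tsum_eq (Fin.consEquiv fun _ => M') (fun g => ∏ i, f i (g i))).symm
      _ = ∑' p : M' × (Fin n → M'), f 0 p.1 * ∏ j : Fin n, f j.succ (p.2 j) := by
          refine tsum_congr fun p => ?_
          rw [Fin.prod_univ_succ]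
          simp [Fin.consEquiv]
      _ = ∑' (a : M'), ∑' (b : Fin n → M'), f 0 a * ∏ j : Fin n, f j.succ (b j) :=
          by exact ENNReal.tsum_prod (α := M') (β := Fin n → M') (f := fun a b => f 0 a * ∏ j : Fin n, f j.succ (b j))
      _ = (∑' a : M', f 0 a) * ∑' b : Fin n → M', ∏ j : Fin n, f j.succ (b j) := by
          simp_rw [ENNReal.tsum_mul_left]
          exact ENNReal.tsum_mul_right
      _ = ∏ i, ∑' x, f i x := by rw [ih, Fin.prod_univ_succ]

lemma piFubini {N M' : Type*} [Fintype N] (f : N → M' → ℝ≥0∞) :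
    (∑' g : N → M', ∏ i, f i (g i)) = ∏ i, ∑' x, f i x := by
  classical
  set n := Fintype.card N
  let e : N ≃ Fin n := Fintype.equivFin N
  let E : (Fin n → M') ≃ (N → M') := Equiv.arrowCongr e.symm (Equiv.refl M')
  have h1 : (∑' g : N → M', ∏ i, f i (g i))
      = ∑' g : Fin n → M', ∏ i, f i (E g i) :=
    (Equiv.tsum_eq E (fun h => ∏ i, f i (h i))).symm
  have h2 : ∀ g : Fin n → M', (∏ i, f i (E g i)) = ∏ j, f (e.symm j) (g j) := by
    intro g
    rw [← Equiv.prod_comp e.symm (fun i => f i (E g i))]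
    refine Fintype.prod_congr _ _ fun j => ?_
    simp [E, Equiv.arrowCongr]
  rw [h1, tsum_congr h2, piFubini_fin]
  exact Equiv.prod_comp e.symm fun i => ∑' x, f i x

lemma tsum_prod_mul {A B : Type*} (u : A → ℝ≥0∞) (v : B → ℝ≥0∞) :
    ∑' p : A × B, u p.1 * v p.2 = (∑' a, u a) * ∑' b, v b := by
  rw [show (∑' p : A × B, u p.1 * v p.2) = ∑' (a : A) (b : B), u a * v b from
    by exact ENNReal.tsum_prod (α := A) (β := B) (f := fun a b => u a * v b)]
  simp_rw [ENNReal.tsum_mul_left]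
  exact ENNReal.tsum_mul_right

lemma sum_over_k {M : Type*} [AddCommMonoid M] (H : M × M → ℝ≥0∞) :
    ∑' (k : M), ∑' p : M × M, (if p.1 + p.2 = k then H p else 0) = ∑' p : M × M, H p := by
  have hcomm : (∑' (k : M), ∑' p : M × M, (if p.1 + p.2 = k then H p else 0))
      = ∑' (p : M × M), ∑' (k : M), (if p.1 + p.2 = k then H p else 0) := by
    exact ENNReal.tsum_comm (α := M) (β := M × M) (f := fun k p => if p.1 + p.2 = k then H p else 0)
  rw [hcomm]
  refine tsum_congr fun p => ?_
  rw [tsum_eq_single (p.1 + p.2) (fun k hk => if_neg (fun h => hk h.symm))]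
  exact if_pos rfl

lemma mul_tsub_mul_le (a b c d : ℝ≥0∞) : a * b - c * d ≤ (a - c) * b + c * (b - d) := by
  calc a * b - c * d ≤ ((a - c) + c) * b - c * d := by gcongr; exact le_tsub_add
    _ = ((a - c) * b + c * b) - c * d := by rw [add_mul]
    _ ≤ (a - c) * b + (c * b - c * d) := add_tsub_le_assoc
    _ ≤ (a - c) * b + c * (b - d) := by
        gcongr
        rw [tsub_le_iff_right, ← mul_add]
        exact mul_le_mul_right le_tsub_add _

lemma dL1_split {X : Type*} (f g : X → ℝ≥0∞) :
    dL1 f g = (∑' x, (f x - g x)) + ∑' x, (g x - f x) := ENNReal.tsum_add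

lemma dL1_prodMk {A B : Type*} {f g : A → ℝ≥0∞} {F G : B → ℝ≥0∞}
    (hf : ∑' x, f x ≤ 1) (hg : ∑' x, g x ≤ 1) (hF : ∑' x, F x ≤ 1) (hG : ∑' x, G x ≤ 1) :
    dL1 (fun p : A × B => f p.1 * F p.2) (fun p => g p.1 * G p.2) ≤ dL1 f g + dL1 F G := by
  unfold dL1
  calc ∑' p : A × B, ((f p.1 * F p.2 - g p.1 * G p.2) + (g p.1 * G p.2 - f p.1 * F p.2))
      ≤ ∑' p : A × B, (((f p.1 - g p.1) * F p.2 + g p.1 * (F p.2 - G p.2))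
          + ((g p.1 - f p.1) * G p.2 + f p.1 * (G p.2 - F p.2))) :=
        ENNReal.tsum_le_tsum fun p => add_le_add (mul_tsub_mul_le _ _ _ _) (mul_tsub_mul_le _ _ _ _)
    _ = ((∑' x, (f x - g x)) * ∑' x, F x + (∑' x, g x) * ∑' x, (F x - G x))
        + ((∑' x, (g x - f x)) * ∑' x, G x + (∑' x, f x) * ∑' x, (G x - F x)) := by
        rw [ENNReal.tsum_add, ENNReal.tsum_add, ENNReal.tsum_add]
        rw [show (∑' (a : A × B), (f a.1 - g a.1) * F a.2)
            = (∑' x, (f x - g x)) * ∑' x, F x from tsum_prod_mul (fun x => f x - g x) F]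
        rw [show (∑' (a : A × B), g a.1 * (F a.2 - G a.2))
            = (∑' x, g x) * ∑' x, (F x - G x) from tsum_prod_mul g (fun x => F x - G x)]
        rw [show (∑' (a : A × B), (g a.1 - f a.1) * G a.2)
            = (∑' x, (g x - f x)) * ∑' x, G x from tsum_prod_mul (fun x => g x - f x) G]
        rw [show (∑' (a : A × B), f a.1 * (G a.2 - F a.2))
            = (∑' x, f x) * ∑' x, (G x - F x) from tsum_prod_mul f (fun x => G x - F x)]
    _ ≤ ((∑' x, (f x - g x)) * 1 + 1 * ∑' x, (F x - G x))
        + ((∑' x, (g x - f x)) * 1 + 1 * ∑' x, (G x - F x)) := by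
        gcongr
    _ = ((∑' x, (f x - g x)) + ∑' x, (g x - f x)) + ((∑' x, (F x - G x)) + ∑' x, (G x - F x)) := by
        ring
    _ = (∑' k, ((f k - g k) + (g k - f k))) + ∑' k, ((F k - G k) + (G k - F k)) := by
        rw [ENNReal.tsum_add, ENNReal.tsum_add]

lemma conv2_dL1 {M : Type*} [AddCommMonoid M] {f g f' g' : M → ℝ≥0∞}
    (hf : ∑' x, f x ≤ 1) (hg : ∑' x, g x ≤ 1) (hf' : ∑' x, f' x ≤ 1) (hg' : ∑' x, g' x ≤ 1) :
    dL1 (conv2 f g) (conv2 f' g') ≤ dL1 f f' + dL1 g g' := by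
  have pt : ∀ (u v u' v' : M → ℝ≥0∞) (k : M),
      conv2 u v k - conv2 u' v' k ≤
        ∑' p : M × M, (if p.1 + p.2 = k then
          ((u p.1 - u' p.1) * v p.2 + u' p.1 * (v p.2 - v' p.2)) else 0) := by
    intro u v u' v' k
    refine le_trans (tsum_tsub_le _ _) (ENNReal.tsum_le_tsum fun p => ?_)
    by_cases h : p.1 + p.2 = k
    · simp only [if_pos h]
      exact mul_tsub_mul_le _ _ _ _
    · simp [h]
  unfold dL1
  calc ∑' k, ((conv2 f g k - conv2 f' g' k) + (conv2 f' g' k - conv2 f g k))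
      ≤ ∑' k, ((∑' p : M × M, (if p.1 + p.2 = k then
            ((f p.1 - f' p.1) * g p.2 + f' p.1 * (g p.2 - g' p.2)) else 0))
          + ∑' p : M × M, (if p.1 + p.2 = k then
            ((f' p.1 - f p.1) * g' p.2 + f p.1 * (g' p.2 - g p.2)) else 0)) :=
        ENNReal.tsum_le_tsum fun k => add_le_add (pt f g f' g' k) (pt f' g' f g k)
    _ = (∑' p : M × M, ((f p.1 - f' p.1) * g p.2 + f' p.1 * (g p.2 - g' p.2)))
        + ∑' p : M × M, ((f' p.1 - f p.1) * g' p.2 + f p.1 * (g' p.2 - g p.2)) := by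
        rw [ENNReal.tsum_add, sum_over_k, sum_over_k]
    _ = ((∑' x, (f x - f' x)) * ∑' x, g x + (∑' x, f' x) * ∑' x, (g x - g' x))
        + ((∑' x, (f' x - f x)) * ∑' x, g' x + (∑' x, f x) * ∑' x, (g' x - g x)) := by
        rw [ENNReal.tsum_add, ENNReal.tsum_add]
        rw [show (∑' (a : M × M), (f a.1 - f' a.1) * g a.2)
            = (∑' x, (f x - f' x)) * ∑' x, g x from tsum_prod_mul (fun x => f x - f' x) g]
        rw [show (∑' (a : M × M), f' a.1 * (g a.2 - g' a.2))
            = (∑' x, f' x) * ∑' x, (g x - g' x) from tsum_prod_mul f' (fun x => g x - g' x)]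
        rw [show (∑' (a : M × M), (f' a.1 - f a.1) * g' a.2)
            = (∑' x, (f' x - f x)) * ∑' x, g' x from tsum_prod_mul (fun x => f' x - f x) g']
        rw [show (∑' (a : M × M), f a.1 * (g' a.2 - g a.2))
            = (∑' x, f x) * ∑' x, (g' x - g x) from tsum_prod_mul f (fun x => g' x - g x)]
    _ ≤ ((∑' x, (f x - f' x)) * 1 + 1 * ∑' x, (g x - g' x))
        + ((∑' x, (f' x - f x)) * 1 + 1 * ∑' x, (g' x - g x)) := by gcongr
    _ = ((∑' x, (f x - f' x)) + ∑' x, (f' x - f x)) + ((∑' x, (g x - g' x)) + ∑' x, (g' x - g x)) := by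
        ring
    _ = dL1 f f' + dL1 g g' := by rw [dL1_split, dL1_split]

lemma bigConv_reindex {M N N' : Type*} [AddCommMonoid M] [Fintype N] [Fintype N']
    (e : N' ≃ N) (q : N → M → ℝ≥0∞) :
    bigConv q = bigConv (fun j => q (e j)) := by
  funext k
  unfold bigConv
  let E : (N' → M) ≃ (N → M) := Equiv.arrowCongr e (Equiv.refl M)
  rw [← Equiv.tsum_eq E (fun m : N → M => if (∑ i, m i) = k then ∏ i, q i (m i) else 0)]
  refine tsum_congr fun g => ?_
  have h1 : (∑ i, E g i) = ∑ j, g j := by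
    rw [show (∑ i, E g i) = ∑ i, g (e.symm i) from
      Fintype.sum_congr _ _ fun i => by simp [E, Equiv.arrowCongr]]
    exact Equiv.sum_comp e.symm g
  have h2 : (∏ i, q i (E g i)) = ∏ j, q (e j) (g j) := by
    rw [← Equiv.prod_comp e (fun i => q i (E g i))]
    exact Fintype.prod_congr _ _ fun j => by simp [E, Equiv.arrowCongr]
  rw [h1, h2]

lemma bigConv_empty {M N : Type*} [AddCommMonoid M] [Fintype N] [IsEmpty N]
    (q : N → M → ℝ≥0∞) : bigConv q = δ0 := by
  funext k
  unfold bigConv δ0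
  haveI : Unique (N → M) := ⟨⟨fun i => (IsEmpty.false i).elim⟩,
    fun f => funext fun i => (IsEmpty.false i).elim⟩
  rw [tsum_eq_single (default : N → M) (fun b hb => absurd (Subsingleton.elim b default) hb)]
  simp [eq_comm]

lemma bigConv_succ {M : Type*} [AddCommMonoid M] {n : ℕ} (q : Fin (n+1) → M → ℝ≥0∞) :
    bigConv q = conv2 (q 0) (bigConv (fun j : Fin n => q j.succ)) := by
  funext k
  unfold bigConv conv2
  have h1 : (∑' m : Fin (n+1) → M, if (∑ i, m i) = k then ∏ i, q i (m i) else 0)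
      = ∑' (x : M) (h : Fin n → M), (if (x + ∑ j, h j) = k
          then q 0 x * ∏ j : Fin n, q j.succ (h j) else 0) := by
    rw [← Equiv.tsum_eq (Fin.consEquiv (fun _ : Fin (n+1) => M))
      (fun m : Fin (n+1) → M => if (∑ i, m i) = k then ∏ i, q i (m i) else 0)]
    have step1 : ∀ p : M × (Fin n → M),
        (if (∑ i, (Fin.consEquiv (fun _ : Fin (n+1) => M)) p i) = k
          then ∏ i, q i ((Fin.consEquiv (fun _ : Fin (n+1) => M)) p i) else 0)
        = if (p.1 + ∑ j, p.2 j) = k then q 0 p.1 * ∏ j : Fin n, q j.succ (p.2 j) else 0 := by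
      intro p
      have hs : (∑ i, (Fin.consEquiv (fun _ : Fin (n+1) => M)) p i) = p.1 + ∑ j, p.2 j := by
        rw [Fin.sum_univ_succ]; simp [Fin.consEquiv]
      have hp : (∏ i, q i ((Fin.consEquiv (fun _ : Fin (n+1) => M)) p i))
          = q 0 p.1 * ∏ j : Fin n, q j.succ (p.2 j) := by
        rw [Fin.prod_univ_succ]; simp [Fin.consEquiv]
      rw [hs, hp]
    rw [tsum_congr step1]
    exact ENNReal.tsum_prod (α := M) (β := Fin n → M)
      (f := fun x h => if (x + ∑ j, h j) = k then q 0 x * ∏ j : Fin n, q j.succ (h j) else 0)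
  have h2 : (∑' p : M × M, if p.1 + p.2 = k
        then q 0 p.1 * (∑' m : Fin n → M, if (∑ j, m j) = p.2 then ∏ j, q j.succ (m j) else 0) else 0)
      = ∑' (x : M) (y : M) (h : Fin n → M),
          (if (∑ j, h j) = y ∧ x + y = k then q 0 x * ∏ j, q j.succ (h j) else 0) := by
    have hpr : (∑' p : M × M, if p.1 + p.2 = k
        then q 0 p.1 * (∑' m : Fin n → M, if (∑ j, m j) = p.2 then ∏ j, q j.succ (m j) else 0) else 0)
        = ∑' (x : M) (y : M), (if x + y = k
        then q 0 x * (∑' m : Fin n → M, if (∑ j, m j) = y then ∏ j, q j.succ (m j) else 0) else 0) := by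
      exact ENNReal.tsum_prod (α := M) (β := M) (f := fun x y => if x + y = k
        then q 0 x * (∑' m : Fin n → M, if (∑ j, m j) = y then ∏ j, q j.succ (m j) else 0) else 0)
    rw [hpr]
    refine tsum_congr fun x => tsum_congr fun y => ?_
    by_cases hxy : x + y = k
    · rw [if_pos hxy, ← ENNReal.tsum_mul_left]
      refine tsum_congr fun h => ?_
      by_cases hh : (∑ j, h j) = y
      · rw [if_pos hh, if_pos ⟨hh, hxy⟩]
      · rw [if_neg hh, if_neg (fun hc => hh hc.1), mul_zero]
    · rw [if_neg hxy]
      exact ((tsum_congr fun h => if_neg (fun hc => hxy hc.2)).trans tsum_zero).symm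
  rw [h1, h2]
  refine tsum_congr fun x => ?_
  have hcm : (∑' (y : M) (h : Fin n → M),
      (if (∑ j, h j) = y ∧ x + y = k then q 0 x * ∏ j, q j.succ (h j) else 0))
      = ∑' (h : Fin n → M) (y : M),
      (if (∑ j, h j) = y ∧ x + y = k then q 0 x * ∏ j, q j.succ (h j) else 0) := by
    exact ENNReal.tsum_comm (α := M) (β := Fin n → M)
      (f := fun y h => if (∑ j, h j) = y ∧ x + y = k then q 0 x * ∏ j, q j.succ (h j) else 0)
  rw [hcm]
  refine (tsum_congr fun h => ?_).symm
  rw [tsum_eq_single (∑ j, h j) (fun y hy => if_neg (fun hc => hy hc.1.symm))]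
  by_cases hk : x + ∑ j, h j = k
  · rw [if_pos hk, if_pos ⟨rfl, hk⟩]
  · rw [if_neg hk, if_neg (fun hc => hk hc.2)]

lemma tsum_bigConv {M N : Type*} [AddCommMonoid M] [Fintype N] (q : N → M → ℝ≥0∞) :
    ∑' k, bigConv q k = ∏ i, ∑' x, q i x := by
  unfold bigConv
  have hcm : (∑' (k : M) (m : N → M), if (∑ i, m i) = k then ∏ i, q i (m i) else 0)
      = ∑' (m : N → M) (k : M), if (∑ i, m i) = k then ∏ i, q i (m i) else 0 := by
    exact ENNReal.tsum_comm (α := M) (β := N → M)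
      (f := fun k m => if (∑ i, m i) = k then ∏ i, q i (m i) else 0)
  rw [hcm]
  rw [← piFubini q]
  refine tsum_congr fun m => ?_
  rw [tsum_eq_single (∑ i, m i) (fun k hk => if_neg (fun h => hk h.symm))]
  exact if_pos rfl

lemma tsum_bigConv_le {M N : Type*} [AddCommMonoid M] [Fintype N] {q : N → M → ℝ≥0∞}
    (hq : ∀ i, ∑' x, q i x ≤ 1) : ∑' k, bigConv q k ≤ 1 := by
  rw [tsum_bigConv]
  exact Finset.prod_le_one (fun i _ => zero_le) (fun i _ => hq i)

lemma bigConv_dL1_fin {M : Type*} [AddCommMonoid M] :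
    ∀ n (q p : Fin n → M → ℝ≥0∞), (∀ i, ∑' x, q i x ≤ 1) → (∀ i, ∑' x, p i x ≤ 1) →
      dL1 (bigConv q) (bigConv p) ≤ ∑ i, dL1 (q i) (p i) := by
  intro n
  induction n with
  | zero =>
    intro q p _ _
    rw [bigConv_empty q, bigConv_empty p, dL1_self]
    simp
  | succ n ih =>
    intro q p hq hp
    rw [bigConv_succ q, bigConv_succ p, Fin.sum_univ_succ]
    refine le_trans (conv2_dL1 (hq 0) (tsum_bigConv_le (fun j => hq j.succ)) (hp 0)
      (tsum_bigConv_le (fun j => hp j.succ))) ?_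
    exact add_le_add_right (ih _ _ (fun j => hq j.succ) (fun j => hp j.succ)) _

lemma bigConv_dL1 {M N : Type*} [AddCommMonoid M] [Fintype N] {q p : N → M → ℝ≥0∞}
    (hq : ∀ i, ∑' x, q i x ≤ 1) (hp : ∀ i, ∑' x, p i x ≤ 1) :
    dL1 (bigConv q) (bigConv p) ≤ ∑ i, dL1 (q i) (p i) := by
  let e := Fintype.equivFin N
  rw [bigConv_reindex e.symm q, bigConv_reindex e.symm p]
  refine le_trans (bigConv_dL1_fin _ _ _ (fun j => hq _) (fun j => hp _)) ?_
  rw [Equiv.sum_comp e.symm (fun i => dL1 (q i) (p i))]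

lemma bigConv_hom_fin {M V : Type*} [AddCommMonoid M] [AddCommMonoid V]
    (Φ : V → M → ℝ≥0∞) (h0 : Φ 0 = δ0)
    (hadd : ∀ a b, conv2 (Φ a) (Φ b) = Φ (a + b)) :
    ∀ n (v : Fin n → V), bigConv (fun i => Φ (v i)) = Φ (∑ i, v i) := by
  intro n
  induction n with
  | zero =>
    intro v
    rw [bigConv_empty, show (∑ i : Fin 0, v i) = 0 from by simp, h0]
  | succ n ih =>
    intro v
    rw [bigConv_succ (fun i => Φ (v i)), ih (fun j => v j.succ), hadd, ← Fin.sum_univ_succ]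

lemma bigConv_hom {M V N : Type*} [AddCommMonoid M] [AddCommMonoid V] [Fintype N]
    (Φ : V → M → ℝ≥0∞) (h0 : Φ 0 = δ0)
    (hadd : ∀ a b, conv2 (Φ a) (Φ b) = Φ (a + b)) (v : N → V) :
    bigConv (fun i => Φ (v i)) = Φ (∑ i, v i) := by
  let e := Fintype.equivFin N
  rw [bigConv_reindex e.symm (fun i => Φ (v i)), bigConv_hom_fin Φ h0 hadd, ← Equiv.sum_comp e.symm v]

lemma iteInst {α : Sort*} {P : Prop} (h1 h2 : Decidable P) (a b : α) :
    @ite α P h1 a b = @ite α P h2 a b := by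
  cases Subsingleton.elim h1 h2; rfl

lemma prod_ite_all {I : Type*} [Fintype I] (P : I → Prop) (a : I → ℝ≥0∞) :
    (∏ c, if P c then a c else 0) = if (∀ c, P c) then ∏ c, a c else 0 := by
  by_cases h : ∀ c, P c
  · rw [if_pos h]
    exact Finset.prod_congr rfl fun c _ => if_pos (h c)
  · rw [if_neg h]
    push_neg at h
    obtain ⟨c, hc⟩ := h
    exact Finset.prod_eq_zero (Finset.mem_univ c) (if_neg hc)

lemma conv2_pi {I : Type*} [Fintype I] {M' : Type*} [AddCommMonoid M']
    (f g : I → M' → ℝ≥0∞) (k : I → M') :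
    conv2 (fun m : I → M' => ∏ c, f c (m c)) (fun m => ∏ c, g c (m c)) k
      = ∏ c, conv2 (f c) (g c) (k c) := by
  have base : ∀ F : ((I → M') × (I → M')) → ℝ≥0∞,
      (∑' p, F p) = ∑' w : I → M' × M', F ((Equiv.arrowProdEquivProdArrow I (fun _ => M') (fun _ => M')) w) :=
    fun F => (Equiv.tsum_eq _ F).symm
  refine (base _).trans ?_
  refine Eq.trans (tsum_congr (fun w => ?_))
    (piFubini (fun c (p : M' × M') => if p.1 + p.2 = k c then f c p.1 * g c p.2 else 0))
  by_cases h : ∀ c, (w c).1 + (w c).2 = k c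
  · have hc : ((Equiv.arrowProdEquivProdArrow I (fun _ => M') (fun _ => M')) w).1
        + ((Equiv.arrowProdEquivProdArrow I (fun _ => M') (fun _ => M')) w).2 = k := funext fun c => h c
    rw [if_pos hc, prod_ite_all (fun c => (w c).1 + (w c).2 = k c)
      (fun c => f c ((w c).1) * g c ((w c).2)), if_pos h, ← Finset.prod_mul_distrib]
    exact Finset.prod_congr rfl fun c _ => rfl
  · have hc : ¬ (((Equiv.arrowProdEquivProdArrow I (fun _ => M') (fun _ => M')) w).1
        + ((Equiv.arrowProdEquivProdArrow I (fun _ => M') (fun _ => M')) w).2 = k) :=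
      fun hc => h (fun c => congrFun hc c)
    rw [if_neg hc, prod_ite_all (fun c => (w c).1 + (w c).2 = k c)
      (fun c => f c ((w c).1) * g c ((w c).2)), if_neg h]

lemma dL1_pi_fin {M' : Type*} :
    ∀ n (f g : Fin n → M' → ℝ≥0∞), (∀ i, ∑' x, f i x ≤ 1) → (∀ i, ∑' x, g i x ≤ 1) →
      dL1 (fun m : Fin n → M' => ∏ i, f i (m i)) (fun m => ∏ i, g i (m i))
        ≤ ∑ i, dL1 (f i) (g i) := by
  intro n
  induction n with
  | zero =>
    intro f g _ _
    have h1 : (fun m : Fin 0 → M' => ∏ i, f i (m i)) = fun m => ∏ i, g i (m i) := by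
      funext m; simp
    rw [h1, dL1_self]
    simp
  | succ n ih =>
    intro f g hf hg
    have hre := dL1_comp_equiv (Fin.consEquiv (fun _ : Fin (n+1) => M'))
      (fun m : Fin (n+1) → M' => ∏ i, f i (m i)) (fun m => ∏ i, g i (m i))
    rw [← hre]
    have h1 : (fun p : M' × (Fin n → M') =>
        (fun m : Fin (n+1) → M' => ∏ i, f i (m i)) ((Fin.consEquiv (fun _ : Fin (n+1) => M')) p))
        = fun p : M' × (Fin n → M') => f 0 p.1 * ∏ j : Fin n, f j.succ (p.2 j) := by
      funext p
      rw [show (fun m : Fin (n+1) → M' => ∏ i, f i (m i)) ((Fin.consEquiv (fun _ : Fin (n+1) => M')) p)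
          = ∏ i, f i ((Fin.consEquiv (fun _ : Fin (n+1) => M')) p i) from rfl]
      rw [Fin.prod_univ_succ]
      simp [Fin.consEquiv]
    have h2 : (fun p : M' × (Fin n → M') =>
        (fun m : Fin (n+1) → M' => ∏ i, g i (m i)) ((Fin.consEquiv (fun _ : Fin (n+1) => M')) p))
        = fun p : M' × (Fin n → M') => g 0 p.1 * ∏ j : Fin n, g j.succ (p.2 j) := by
      funext p
      rw [show (fun m : Fin (n+1) → M' => ∏ i, g i (m i)) ((Fin.consEquiv (fun _ : Fin (n+1) => M')) p)
          = ∏ i, g i ((Fin.consEquiv (fun _ : Fin (n+1) => M')) p i) from rfl]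
      rw [Fin.prod_univ_succ]
      simp [Fin.consEquiv]
    rw [h1, h2, Fin.sum_univ_succ]
    have hFprod : (∑' m : Fin n → M', ∏ j, f j.succ (m j)) ≤ 1 := by
      rw [piFubini]
      exact Finset.prod_le_one (fun i _ => zero_le) (fun i _ => hf i.succ)
    have hGprod : (∑' m : Fin n → M', ∏ j, g j.succ (m j)) ≤ 1 := by
      rw [piFubini]
      exact Finset.prod_le_one (fun i _ => zero_le) (fun i _ => hg i.succ)
    refine le_trans (dL1_prodMk (hf 0) (hg 0) hFprod hGprod) ?_
    exact add_le_add_right (ih _ _ (fun j => hf j.succ) (fun j => hg j.succ)) _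

lemma dL1_pi {I M' : Type*} [Fintype I] {f g : I → M' → ℝ≥0∞}
    (hf : ∀ i, ∑' x, f i x ≤ 1) (hg : ∀ i, ∑' x, g i x ≤ 1) :
    dL1 (fun m : I → M' => ∏ i, f i (m i)) (fun m => ∏ i, g i (m i))
      ≤ ∑ i, dL1 (f i) (g i) := by
  let e := Fintype.equivFin I
  let E : (Fin (Fintype.card I) → M') ≃ (I → M') := Equiv.arrowCongr e.symm (Equiv.refl M')
  have hre := dL1_comp_equiv E (fun m : I → M' => ∏ i, f i (m i)) (fun m => ∏ i, g i (m i))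
  rw [← hre]
  have h1 : (fun h : Fin (Fintype.card I) → M' => ∏ i, f i (E h i))
      = fun h : Fin (Fintype.card I) → M' => ∏ j, f (e.symm j) (h j) := by
    funext h
    rw [← Equiv.prod_comp e.symm (fun i => f i (E h i))]
    exact Fintype.prod_congr _ _ fun j => by simp [E, Equiv.arrowCongr]
  have h2 : (fun h : Fin (Fintype.card I) → M' => ∏ i, g i (E h i))
      = fun h : Fin (Fintype.card I) → M' => ∏ j, g (e.symm j) (h j) := by
    funext h
    rw [← Equiv.prod_comp e.symm (fun i => g i (E h i))]
    exact Fintype.prod_congr _ _ fun j => by simp [E, Equiv.arrowCongr]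
  rw [show (fun h : Fin (Fintype.card I) → M' =>
      (fun m : I → M' => ∏ i, f i (m i)) (E h)) = fun h => ∏ i, f i (E h i) from rfl,
    show (fun h : Fin (Fintype.card I) → M' =>
      (fun m : I → M' => ∏ i, g i (m i)) (E h)) = fun h => ∏ i, g i (E h i) from rfl, h1, h2]
  refine le_trans (dL1_pi_fin _ _ _ (fun j => hf _) (fun j => hg _)) ?_
  rw [Equiv.sum_comp e.symm (fun i => dL1 (f i) (g i))]

/-! ### Poisson distributions -/

lemma poiPMF_nonneg {x : ℝ} (hx : 0 ≤ x) (k : ℕ) : 0 ≤ poiPMF x k := by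
  unfold poiPMF
  positivity

lemma poiPMF_hasSum {x : ℝ} (hx : 0 ≤ x) : HasSum (poiPMF x) 1 := by
  have h := ProbabilityTheory.poissonPMFRealSum x.toNNReal
  have he : (fun n => ProbabilityTheory.poissonPMFReal x.toNNReal n) = poiPMF x := by
    funext n
    unfold ProbabilityTheory.poissonPMFReal poiPMF
    rw [Real.coe_toNNReal x hx]
  rw [Real.coe_toNNReal x hx] at h
  exact h

noncomputable def ePoi (x : ℝ) : ℕ → ℝ≥0∞ := fun k => ENNReal.ofReal (poiPMF x k)

lemma tsum_ePoi {x : ℝ} (hx : 0 ≤ x) : ∑' k, ePoi x k = 1 := by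
  unfold ePoi
  rw [← ENNReal.ofReal_tsum_of_nonneg (poiPMF_nonneg hx) (poiPMF_hasSum hx).summable]
  rw [(poiPMF_hasSum hx).tsum_eq, ENNReal.ofReal_one]

lemma poiPMF_conv {a b : ℝ} (ha : 0 ≤ a) (hb : 0 ≤ b) (kk : ℕ) :
    ∑ ij ∈ Finset.HasAntidiagonal.antidiagonal kk, poiPMF a ij.1 * poiPMF b ij.2 = poiPMF (a + b) kk := by
  rw [Finset.Nat.sum_antidiagonal_eq_sum_range_succ_mk]
  unfold poiPMF
  rw [show Real.exp (-(a + b)) = Real.exp (-a) * Real.exp (-b) by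
    rw [← Real.exp_add]; ring_nf]
  rw [add_pow]
  rw [Finset.mul_sum, Finset.sum_div]
  refine Finset.sum_congr rfl fun i hi => ?_
  have hik : i ≤ kk := Nat.lt_succ_iff.mp (Finset.mem_range.mp hi)
  have key : ((kk.choose i : ℕ) : ℝ) * (i.factorial : ℝ) * ((kk - i).factorial : ℝ)
      = (kk.factorial : ℝ) := by
    exact_mod_cast Nat.choose_mul_factorial_mul_factorial hik
  have h1 : (i.factorial : ℝ) ≠ 0 := Nat.cast_ne_zero.2 (Nat.factorial_ne_zero i)
  have h2 : ((kk - i).factorial : ℝ) ≠ 0 := Nat.cast_ne_zero.2 (Nat.factorial_ne_zero _)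
  have h3 : (kk.factorial : ℝ) ≠ 0 := Nat.cast_ne_zero.2 (Nat.factorial_ne_zero kk)
  field_simp
  rw [← key]
  ring

lemma conv2_ePoi {a b : ℝ} (ha : 0 ≤ a) (hb : 0 ≤ b) :
    conv2 (ePoi a) (ePoi b) = ePoi (a + b) := by
  funext kk
  show (∑' p : ℕ × ℕ, _) = _
  refine Eq.trans (tsum_eq_sum (s := Finset.HasAntidiagonal.antidiagonal kk)
    (fun p hp => if_neg (fun h => hp (Finset.HasAntidiagonal.mem_antidiagonal.2 h)))) ?_
  refine Eq.trans (Finset.sum_congr rfl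
    (fun p hp => if_pos (Finset.HasAntidiagonal.mem_antidiagonal.1 hp))) ?_
  unfold ePoi
  rw [show (∑ p ∈ Finset.HasAntidiagonal.antidiagonal kk, ENNReal.ofReal (poiPMF a p.1) * ENNReal.ofReal (poiPMF b p.2))
      = ∑ p ∈ Finset.HasAntidiagonal.antidiagonal kk, ENNReal.ofReal (poiPMF a p.1 * poiPMF b p.2) from
    Finset.sum_congr rfl fun p _ => (ENNReal.ofReal_mul (poiPMF_nonneg ha p.1)).symm]
  rw [← ENNReal.ofReal_sum_of_nonneg
    (fun p _ => mul_nonneg (poiPMF_nonneg ha p.1) (poiPMF_nonneg hb p.2))]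
  rw [poiPMF_conv ha hb]

lemma ePoi_zero : ePoi 0 = (δ0 : ℕ → ℝ≥0∞) := by
  funext k
  unfold ePoi poiPMF δ0
  cases k with
  | zero => simp
  | succ k => simp

lemma dL1_delta_ePoi {c : ℝ} (hc : 0 ≤ c) :
    dL1 (δ0 : ℕ → ℝ≥0∞) (ePoi c) ≤ ENNReal.ofReal (2 * c) := by
  have hδ : ∑' k : ℕ, (δ0 : ℕ → ℝ≥0∞) k = 1 := by
    refine Eq.trans (tsum_eq_single 0 (fun b hb => ?_)) ?_
    · exact if_neg hb
    · exact if_pos rfl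
  rw [dL1_eq_two_tsub hδ (tsum_ePoi hc)]
  have hsum : (∑' k : ℕ, ((δ0 : ℕ → ℝ≥0∞) k - ePoi c k))
      = (δ0 : ℕ → ℝ≥0∞) 0 - ePoi c 0 := by
    refine Eq.trans (tsum_eq_sum (s := {0}) (fun b hb => ?_)) (Finset.sum_singleton _ _)
    have hb0 : (δ0 : ℕ → ℝ≥0∞) b = 0 := if_neg (by simpa using hb)
    rw [hb0, zero_tsub]
  rw [hsum]
  have h0 : (δ0 : ℕ → ℝ≥0∞) 0 = 1 := if_pos rfl
  have h1 : ePoi c 0 = ENNReal.ofReal (Real.exp (-c)) := by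
    unfold ePoi poiPMF
    norm_num
  rw [h0, h1]
  have h2 : (1 : ℝ≥0∞) - ENNReal.ofReal (Real.exp (-c)) = ENNReal.ofReal (1 - Real.exp (-c)) := by
    rw [ENNReal.ofReal_sub _ (Real.exp_pos (-c)).le, ENNReal.ofReal_one]
  rw [h2]
  have h3 : 1 - Real.exp (-c) ≤ c := by
    have := Real.add_one_le_exp (-c)
    linarith
  calc (2 : ℝ≥0∞) * ENNReal.ofReal (1 - Real.exp (-c))
      ≤ 2 * ENNReal.ofReal c := mul_le_mul_right (ENNReal.ofReal_le_ofReal h3) _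
    _ = ENNReal.ofReal 2 * ENNReal.ofReal c := by norm_num
    _ = ENNReal.ofReal (2 * c) := (ENNReal.ofReal_mul (by norm_num)).symm

lemma dL1_ePoi_le {a b : ℝ} (ha : 0 ≤ a) (hb : 0 ≤ b) :
    dL1 (ePoi a) (ePoi b) ≤ ENNReal.ofReal (2 * |a - b|) := by
  have main : ∀ a b : ℝ, 0 ≤ a → 0 ≤ b → a ≤ b →
      dL1 (ePoi a) (ePoi b) ≤ ENNReal.ofReal (2 * |a - b|) := by
    intro a b ha hb hab
    have e1 : ePoi a = conv2 (ePoi a) (ePoi 0) := by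
      rw [conv2_ePoi ha le_rfl, add_zero]
    have e2 : ePoi b = conv2 (ePoi a) (ePoi (b - a)) := by
      rw [conv2_ePoi ha (sub_nonneg.2 hab), add_sub_cancel]
    rw [e1, e2]
    refine le_trans (conv2_dL1 (le_of_eq (tsum_ePoi ha)) (le_of_eq (tsum_ePoi le_rfl))
      (le_of_eq (tsum_ePoi ha)) (le_of_eq (tsum_ePoi (sub_nonneg.2 hab)))) ?_
    rw [dL1_self, zero_add, ePoi_zero]
    refine le_trans (dL1_delta_ePoi (sub_nonneg.2 hab)) ?_
    rw [show |a - b| = b - a from by rw [abs_sub_comm]; exact abs_of_nonneg (sub_nonneg.2 hab)]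
  rcases le_total a b with h | h
  · exact main a b ha hb h
  · rw [dL1_comm, abs_sub_comm]
    exact main b a hb ha h

noncomputable def ePoiN (a : ℝ≥0) : ℕ → ℝ≥0∞ := ePoi (a : ℝ)

lemma ePoiN_zero : ePoiN 0 = (δ0 : ℕ → ℝ≥0∞) := by
  unfold ePoiN
  rw [show ((0 : ℝ≥0) : ℝ) = 0 from rfl, ePoi_zero]

lemma conv2_ePoiN (a b : ℝ≥0) : conv2 (ePoiN a) (ePoiN b) = ePoiN (a + b) := by
  unfold ePoiN
  rw [conv2_ePoi (NNReal.coe_nonneg a) (NNReal.coe_nonneg b)]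
  norm_num

lemma bigConv_ePoiN {N : Type*} [Fintype N] (v : N → ℝ≥0) :
    bigConv (fun i => ePoiN (v i)) = ePoiN (∑ i, v i) :=
  bigConv_hom ePoiN ePoiN_zero conv2_ePoiN v

noncomputable def prodPoiN {I : Type*} [Fintype I] (μ : I → ℝ≥0) : (I → ℕ) → ℝ≥0∞ :=
  fun m => ∏ c, ePoiN (μ c) (m c)

lemma prodPoiN_zero {I : Type*} [Fintype I] : prodPoiN (0 : I → ℝ≥0) = δ0 := by
  funext m
  have h1 : prodPoiN (0 : I → ℝ≥0) m = ∏ c, (δ0 : ℕ → ℝ≥0∞) (m c) :=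
    Finset.prod_congr rfl fun c _ => by
      rw [show ((0 : I → ℝ≥0) c) = 0 from rfl, ePoiN_zero]
  rw [h1]
  refine Eq.trans (prod_ite_all (fun c => m c = 0) (fun _ => (1 : ℝ≥0∞))) ?_
  rw [Finset.prod_const_one]
  by_cases h : m = 0
  · rw [if_pos (show ∀ c, m c = 0 from fun c => congrFun h c)]
    exact (if_pos h).symm
  · rw [if_neg (show ¬ ∀ c, m c = 0 from fun hc => h (funext fun c => hc c))]
    exact (if_neg h).symm

lemma conv2_prodPoiN {I : Type*} [Fintype I] (μ ν : I → ℝ≥0) :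
    conv2 (prodPoiN μ) (prodPoiN ν) = prodPoiN (μ + ν) := by
  funext kk
  have h := conv2_pi (fun c => ePoiN (μ c)) (fun c => ePoiN (ν c)) kk
  refine h.trans ?_
  unfold prodPoiN
  refine Finset.prod_congr rfl fun c _ => ?_
  rw [conv2_ePoiN]
  rfl

lemma bigConv_prodPoiN {I N : Type*} [Fintype I] [Fintype N] (μ : N → I → ℝ≥0) :
    bigConv (fun i => prodPoiN (μ i)) = prodPoiN (∑ i, μ i) :=
  bigConv_hom prodPoiN prodPoiN_zero conv2_prodPoiN μ

lemma tsum_prodPoiN {I : Type*} [Fintype I] (μ : I → ℝ≥0) :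
    ∑' m : I → ℕ, prodPoiN μ m = 1 := by
  unfold prodPoiN
  rw [piFubini (fun c k => ePoiN (μ c) k)]
  refine Finset.prod_eq_one fun c _ => tsum_ePoi (NNReal.coe_nonneg (μ c))

lemma dL1_prodPoiN_le {I : Type*} [Fintype I] (μ ν : I → ℝ≥0) :
    dL1 (prodPoiN μ) (prodPoiN ν) ≤ ∑ c, ENNReal.ofReal (2 * |(μ c : ℝ) - (ν c : ℝ)|) := by
  refine le_trans (dL1_pi (f := fun c => ePoiN (μ c)) (g := fun c => ePoiN (ν c))
    (fun c => le_of_eq (tsum_ePoi (NNReal.coe_nonneg (μ c)))) (fun c => le_of_eq (tsum_ePoi (NNReal.coe_nonneg (ν c))))) ?_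
  exact Finset.sum_le_sum fun c _ => dL1_ePoi_le (NNReal.coe_nonneg (μ c)) (NNReal.coe_nonneg (ν c))

/-! ### The concrete Bernoulli congestion game model -/

section Model

variable {E T N : Type*} [Fintype E] [Fintype T] [Fintype N]

noncomputable def W (r : N → ℝ) (σ : N → Finset E → ℝ) (i : N) (x : Bool × Finset E) : ℝ≥0∞ :=
  ENNReal.ofReal ((if x.1 then r i else 1 - r i) * σ i x.2)

noncomputable def qq {M : Type*} [AddCommMonoid M] (r : N → ℝ) (σ : N → Finset E → ℝ)
    (f : N → Bool × Finset E → M) (i : N) (m : M) : ℝ≥0∞ :=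
  ∑ x : Bool × Finset E, if f i x = m then W r σ i x else 0

lemma ofReal_prod' {ι : Type*} (s : Finset ι) (f : ι → ℝ) (h : ∀ i ∈ s, 0 ≤ f i) :
    ENNReal.ofReal (∏ i ∈ s, f i) = ∏ i ∈ s, ENNReal.ofReal (f i) := by
  induction s using Finset.cons_induction with
  | empty => simp
  | cons a s ha ih =>
    rw [Finset.prod_cons, Finset.prod_cons,
      ENNReal.ofReal_mul (h a (Finset.mem_cons_self a s)),
      ih (fun i hi => h i (Finset.mem_cons_of_mem hi))]

section Hyps

variable (strat : T → Finset (Finset E)) (r : N → ℝ) (σ : N → Finset E → ℝ) (tm : N → T)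

lemma sum_σ_univ (hσv : ∀ i e, e ∉ strat (tm i) → σ i e = 0)
    (hσ1 : ∀ i, ∑ s ∈ strat (tm i), σ i s = 1) (i : N) :
    (∑ e : Finset E, σ i e) = 1 := by
  rw [← Finset.sum_subset (Finset.subset_univ (strat (tm i)))
    (fun e _ he => hσv i e he)]
  exact hσ1 i

lemma sum_W (hr1 : ∀ i, 0 < r i) (hr2 : ∀ i, r i < 1) (hσ0 : ∀ i e, 0 ≤ σ i e)
    (hσv : ∀ i e, e ∉ strat (tm i) → σ i e = 0)
    (hσ1 : ∀ i, ∑ s ∈ strat (tm i), σ i s = 1) (i : N) :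
    (∑ x : Bool × Finset E, W r σ i x) = 1 := by
  rw [Fintype.sum_prod_type, Fintype.sum_bool]
  have htrue : (∑ e : Finset E, W r σ i (true, e)) = ENNReal.ofReal (r i) := by
    have h1 : ∀ e : Finset E, W r σ i (true, e) = ENNReal.ofReal (r i * σ i e) := fun e => rfl
    rw [Fintype.sum_congr _ _ h1, ← ENNReal.ofReal_sum_of_nonneg
      (fun e _ => mul_nonneg (hr1 i).le (hσ0 i e)), ← Finset.mul_sum,
      sum_σ_univ strat σ tm hσv hσ1 i, mul_one]
  have hfalse : (∑ e : Finset E, W r σ i (false, e)) = ENNReal.ofReal (1 - r i) := by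
    have h1 : ∀ e : Finset E, W r σ i (false, e) = ENNReal.ofReal ((1 - r i) * σ i e) :=
      fun e => rfl
    rw [Fintype.sum_congr _ _ h1, ← ENNReal.ofReal_sum_of_nonneg
      (fun e _ => mul_nonneg (by linarith [hr2 i]) (hσ0 i e)), ← Finset.mul_sum,
      sum_σ_univ strat σ tm hσv hσ1 i, mul_one]
  rw [htrue, hfalse, ← ENNReal.ofReal_add (hr1 i).le (by linarith [hr2 i])]
  norm_num

lemma bexpVal_nonneg (hr1 : ∀ i, 0 < r i) (hr2 : ∀ i, r i < 1) (hσ0 : ∀ i e, 0 ≤ σ i e)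
    (g : (N → Bool) → (N → Finset E) → ℝ) (hg : ∀ u a, 0 ≤ g u a) :
    0 ≤ bexpVal r σ g := by
  refine Finset.sum_nonneg fun u _ => Finset.sum_nonneg fun a _ => mul_nonneg ?_ (hg u a)
  refine Finset.prod_nonneg fun i _ => mul_nonneg ?_ (hσ0 i (a i))
  by_cases h : u i
  · rw [if_pos h]; exact (hr1 i).le
  · rw [if_neg h]; linarith [hr2 i]

lemma tsum_qq {M : Type*} [AddCommMonoid M] (hr1 : ∀ i, 0 < r i) (hr2 : ∀ i, r i < 1)
    (hσ0 : ∀ i e, 0 ≤ σ i e) (hσv : ∀ i e, e ∉ strat (tm i) → σ i e = 0)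
    (hσ1 : ∀ i, ∑ s ∈ strat (tm i), σ i s = 1)
    (f : N → Bool × Finset E → M) (i : N) :
    ∑' m : M, qq r σ f i m = 1 := by
  unfold qq
  refine Eq.trans (Summable.tsum_finsetSum (fun x _ => ENNReal.summable)) ?_
  have h1 : ∀ x : Bool × Finset E,
      (∑' m : M, if f i x = m then W r σ i x else 0) = W r σ i x := fun x => by
    refine Eq.trans (tsum_eq_single (f i x) (fun m hm => if_neg (fun h => hm h.symm))) ?_
    exact if_pos rfl
  rw [Fintype.sum_congr _ _ h1]
  exact sum_W strat r σ tm hr1 hr2 hσ0 hσv hσ1 i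

lemma qq_le_one_of {M : Type*} [AddCommMonoid M] {f : N → Bool × Finset E → M} {i : N}
    {m : M} (h : ∀ x : Bool × Finset E, f i x ≠ m) : qq r σ f i m = 0 :=
  Finset.sum_eq_zero fun x _ => if_neg (h x)

lemma bigConv_qq_eq {M : Type*} [AddCommMonoid M]
    (f : N → Bool × Finset E → M) (k : M) :
    bigConv (qq r σ f) k
      = ∑ p : N → Bool × Finset E,
          (if (∑ i, f i (p i)) = k then ∏ i, W r σ i (p i) else 0) := by
  unfold bigConv qq
  have hexp : ∀ m : N → M,
      (∏ i, ∑ x : Bool × Finset E, (if f i x = m i then W r σ i x else 0))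
        = ∑ p : N → Bool × Finset E, ∏ i, (if f i (p i) = m i then W r σ i (p i) else 0) := by
    intro m
    rw [Finset.prod_univ_sum (fun _ => Finset.univ)
      (fun i x => if f i x = m i then W r σ i x else 0)]
    rw [Fintype.piFinset_univ]
  calc (∑' m : N → M, if (∑ i, m i) = k
          then (∏ i, ∑ x : Bool × Finset E, (if f i x = m i then W r σ i x else 0)) else 0)
      = ∑' m : N → M, ∑ p : N → Bool × Finset E,
          (if (∑ i, m i) = k then ∏ i, (if f i (p i) = m i then W r σ i (p i) else 0) else 0) := by
        refine tsum_congr fun m => ?_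
        by_cases h : (∑ i, m i) = k
        · rw [if_pos h, hexp m]
          exact Finset.sum_congr rfl fun p _ => (if_pos h).symm
        · rw [if_neg h]
          exact (Finset.sum_eq_zero fun p _ => if_neg h).symm
    _ = ∑ p : N → Bool × Finset E, ∑' m : N → M,
          (if (∑ i, m i) = k then ∏ i, (if f i (p i) = m i then W r σ i (p i) else 0) else 0) :=
        Summable.tsum_finsetSum (fun p _ => ENNReal.summable)
    _ = ∑ p : N → Bool × Finset E,
          (if (∑ i, f i (p i)) = k then ∏ i, W r σ i (p i) else 0) := by
        refine Finset.sum_congr rfl fun p _ => ?_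
        refine Eq.trans (tsum_eq_single (fun i => f i (p i)) (fun m hm => ?_)) ?_
        · have hex : ∃ i, m i ≠ f i (p i) := by
            by_contra hall
            push_neg at hall
            exact hm (funext fun i => hall i)
          obtain ⟨i, hi⟩ := hex
          have hz : (∏ j, (if f j (p j) = m j then W r σ j (p j) else 0)) = 0 :=
            Finset.prod_eq_zero (Finset.mem_univ i) (if_neg (fun hc => hi hc.symm))
          by_cases h2 : (∑ i, m i) = k
          · rw [if_pos h2, hz]
          · exact if_neg h2
        · have hprod : (∏ j, (if f j (p j) = f j (p j) then W r σ j (p j) else 0))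
              = ∏ j, W r σ j (p j) :=
            Finset.prod_congr rfl fun j _ => if_pos rfl
          by_cases h2 : (∑ i, f i (p i)) = k
          · rw [if_pos h2, if_pos h2, hprod]
          · rw [if_neg h2, if_neg h2]

lemma ofReal_bexpVal {M : Type*} [AddCommMonoid M]
    (hr1 : ∀ i, 0 < r i) (hr2 : ∀ i, r i < 1) (hσ0 : ∀ i e, 0 ≤ σ i e)
    (f : N → Bool × Finset E → M) (k : M) (g : (N → Bool) → (N → Finset E) → ℝ)
    (hg1 : ∀ u a, (∑ i, f i (u i, a i)) = k → g u a = 1)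
    (hg0 : ∀ u a, (∑ i, f i (u i, a i)) ≠ k → g u a = 0) :
    ENNReal.ofReal (bexpVal r σ g) = bigConv (qq r σ f) k := by
  rw [bigConv_qq_eq]
  unfold bexpVal
  have hw : ∀ (u : N → Bool) (a : N → Finset E) (i : N),
      0 ≤ (if u i then r i else 1 - r i) * σ i (a i) := by
    intro u a i
    refine mul_nonneg ?_ (hσ0 i (a i))
    by_cases h : u i
    · rw [if_pos h]; exact (hr1 i).le
    · rw [if_neg h]; linarith [hr2 i]
  have hterm : ∀ (u : N → Bool) (a : N → Finset E),
      ENNReal.ofReal ((∏ i, (if u i then r i else 1 - r i) * σ i (a i)) * g u a)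
        = if (∑ i, f i (u i, a i)) = k then ∏ i, W r σ i (u i, a i) else 0 := by
    intro u a
    by_cases h : (∑ i, f i (u i, a i)) = k
    · rw [hg1 u a h, mul_one, if_pos h,
        ofReal_prod' Finset.univ _ (fun i _ => hw u a i)]
      rfl
    · rw [hg0 u a h, mul_zero, ENNReal.ofReal_zero, if_neg h]
  have hnn : ∀ (u : N → Bool) (a : N → Finset E),
      0 ≤ (∏ i, (if u i then r i else 1 - r i) * σ i (a i)) * g u a := by
    intro u a
    by_cases h : (∑ i, f i (u i, a i)) = k
    · rw [hg1 u a h, mul_one]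
      exact Finset.prod_nonneg fun i _ => hw u a i
    · rw [hg0 u a h, mul_zero]
  rw [ENNReal.ofReal_sum_of_nonneg
    (fun u _ => Finset.sum_nonneg fun a _ => hnn u a)]
  rw [Finset.sum_congr rfl (fun u _ => ENNReal.ofReal_sum_of_nonneg (fun a _ => hnn u a))]
  rw [Finset.sum_congr rfl (fun u _ => Finset.sum_congr rfl (fun a _ => hterm u a))]
  -- now: ∑ u ∑ a (ite) = ∑ p (ite)
  rw [← Fintype.sum_prod_type (f := fun q : (N → Bool) × (N → Finset E) =>
    if (∑ i, f i (q.1 i, q.2 i)) = k then ∏ i, W r σ i (q.1 i, q.2 i) else 0)]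
  refine (Fintype.sum_equiv (Equiv.arrowProdEquivProdArrow N (fun _ => Bool) (fun _ => Finset E))
    (fun p : N → Bool × Finset E =>
      if (∑ i, f i (p i)) = k then ∏ i, W r σ i (p i) else 0)
    (fun q : (N → Bool) × (N → Finset E) =>
      if (∑ i, f i (q.1 i, q.2 i)) = k then ∏ i, W r σ i (q.1 i, q.2 i) else 0)
    (fun p => rfl)).symm

/-! ### Part 1: single flow -/

noncomputable def f1 (tm : N → T) (t : T) (s : Finset E) (i : N) (x : Bool × Finset E) : ℕ :=
  if tm i = t ∧ x.1 ∧ x.2 = s then 1 else 0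

noncomputable def pP (r : N → ℝ) (σ : N → Finset E → ℝ) (tm : N → T) (t : T) (s : Finset E)
    (i : N) : ℝ :=
  if tm i = t then r i * σ i s else 0

lemma pP_nonneg (hr1 : ∀ i, 0 < r i) (hσ0 : ∀ i e, 0 ≤ σ i e) (t : T) (s : Finset E) (i : N) :
    0 ≤ pP r σ tm t s i := by
  unfold pP
  by_cases h : tm i = t
  · rw [if_pos h]; exact mul_nonneg (hr1 i).le (hσ0 i s)
  · rw [if_neg h]

lemma σ_le_one (hσ0 : ∀ i e, 0 ≤ σ i e) (hσ1 : ∀ i, ∑ s ∈ strat (tm i), σ i s = 1)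
    (i : N) {e : Finset E} (he : e ∈ strat (tm i)) : σ i e ≤ 1 := by
  rw [← hσ1 i]
  exact Finset.single_le_sum (fun e' _ => hσ0 i e') he

lemma pP_le_r (hr1 : ∀ i, 0 < r i) (hσ0 : ∀ i e, 0 ≤ σ i e)
    (hσ1 : ∀ i, ∑ s ∈ strat (tm i), σ i s = 1) {t : T} {s : Finset E} (hs : s ∈ strat t) (i : N) :
    pP r σ tm t s i ≤ r i := by
  unfold pP
  by_cases h : tm i = t
  · rw [if_pos h]
    have hσle : σ i s ≤ 1 := σ_le_one strat σ tm hσ0 hσ1 i (by rw [h]; exact hs)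
    calc r i * σ i s ≤ r i * 1 := mul_le_mul_of_nonneg_left hσle (hr1 i).le
      _ = r i := mul_one _
  · rw [if_neg h]; exact (hr1 i).le

lemma qq_f1_one (hσ0 : ∀ i e, 0 ≤ σ i e) (t : T) (s : Finset E) (i : N) :
    qq r σ (f1 tm t s) i 1 = ENNReal.ofReal (pP r σ tm t s i) := by
  have hqq : qq r σ (f1 tm t s) i 1
      = ∑ x : Bool × Finset E, (if f1 tm t s i x = 1 then W r σ i x else 0) :=
    Finset.sum_congr rfl fun x _ => iteInst _ _ _ _
  rw [hqq, Fintype.sum_prod_type, Fintype.sum_bool]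
  have hfalse : (∑ e : Finset E,
      (if f1 tm t s i (false, e) = 1 then W r σ i (false, e) else 0)) = 0 := by
    refine Finset.sum_eq_zero fun e _ => if_neg ?_
    have h0 : f1 tm t s i (false, e) = 0 := if_neg (fun hc => Bool.false_ne_true hc.2.1)
    rw [h0]
    norm_num
  rw [hfalse, add_zero]
  by_cases ht : tm i = t
  · have step : ∀ e : Finset E, (if f1 tm t s i (true, e) = 1 then W r σ i (true, e) else 0)
        = if e = s then W r σ i (true, e) else 0 := by
      intro e
      by_cases he : e = s
      · rw [if_pos he, if_pos]
        show f1 tm t s i (true, e) = 1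
        exact if_pos ⟨ht, rfl, he⟩
      · rw [if_neg he, if_neg]
        have h0 : f1 tm t s i (true, e) = 0 := if_neg (fun hc => he hc.2.2)
        rw [h0]
        norm_num
    rw [Finset.sum_congr rfl (fun e _ => step e),
      Finset.sum_ite_eq' Finset.univ s (fun e => W r σ i (true, e)),
      if_pos (Finset.mem_univ s)]
    unfold pP
    rw [if_pos ht]
    rfl
  · have step : ∀ e : Finset E, (if f1 tm t s i (true, e) = 1 then W r σ i (true, e) else 0)
        = 0 := by
      intro e
      refine if_neg ?_
      have h0 : f1 tm t s i (true, e) = 0 := if_neg (fun hc => ht hc.1)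
      rw [h0]
      norm_num
    rw [Finset.sum_congr rfl (fun e _ => step e), Finset.sum_const_zero]
    unfold pP
    rw [if_neg ht, ENNReal.ofReal_zero]

lemma qq_f1_other (t : T) (s : Finset E) (i : N) (m : ℕ) (hm0 : m ≠ 0) (hm1 : m ≠ 1) :
    qq r σ (f1 tm t s) i m = 0 := by
  refine qq_le_one_of r σ fun x => ?_
  have hval : f1 tm t s i x = 0 ∨ f1 tm t s i x = 1 := by
    unfold f1
    by_cases h : tm i = t ∧ x.1 ∧ x.2 = s
    · right; exact if_pos h
    · left; exact if_neg h
  rcases hval with h | h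
  · rw [h]; exact fun hc => hm0 hc.symm
  · rw [h]; exact fun hc => hm1 hc.symm

lemma ePoi_zero_val (x : ℝ) : ePoi x 0 = ENNReal.ofReal (Real.exp (-x)) := by
  unfold ePoi poiPMF
  norm_num

lemma ePoi_one_val (x : ℝ) : ePoi x 1 = ENNReal.ofReal (Real.exp (-x) * x) := by
  unfold ePoi poiPMF
  norm_num

lemma dL1_qq_f1 (hr1 : ∀ i, 0 < r i) (hr2 : ∀ i, r i < 1) (hσ0 : ∀ i e, 0 ≤ σ i e)
    (hσv : ∀ i e, e ∉ strat (tm i) → σ i e = 0)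
    (hσ1 : ∀ i, ∑ s ∈ strat (tm i), σ i s = 1)
    {t : T} {s : Finset E} (hs : s ∈ strat t) (i : N) :
    dL1 (qq r σ (f1 tm t s) i) (ePoi (pP r σ tm t s i))
      ≤ ENNReal.ofReal (2 * (r i * pP r σ tm t s i)) := by
  set p := pP r σ tm t s i with hp
  have hp0 : 0 ≤ p := pP_nonneg r σ tm hr1 hσ0 t s i
  have hple : p ≤ r i := pP_le_r strat r σ tm hr1 hσ0 hσ1 hs i
  have hq1 : qq r σ (f1 tm t s) i 1 = ENNReal.ofReal p := qq_f1_one r σ tm hσ0 t s i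
  have htq : ∑' m : ℕ, qq r σ (f1 tm t s) i m = 1 :=
    tsum_qq strat r σ tm hr1 hr2 hσ0 hσv hσ1 _ i
  rw [dL1_eq_two_tsub htq (tsum_ePoi hp0)]
  have hbound : (∑' m : ℕ, (qq r σ (f1 tm t s) i m - ePoi p m))
      ≤ ENNReal.ofReal (r i * p) := by
    refine le_trans (le_of_eq (tsum_eq_sum (s := {0, 1}) (fun m hm => ?_))) ?_
    · have hm0 : m ≠ 0 := fun h => hm (by rw [h]; exact Finset.mem_insert_self _ _)
      have hm1 : m ≠ 1 := fun h => hm (by rw [h]; exact Finset.mem_insert_of_mem (Finset.mem_singleton_self 1))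
      rw [qq_f1_other r σ tm t s i m hm0 hm1, zero_tsub]
    · rw [Finset.sum_pair (show (0:ℕ) ≠ 1 by norm_num)]
      have hsum01 : qq r σ (f1 tm t s) i 0 + ENNReal.ofReal p ≤ 1 := by
        rw [← hq1, ← Finset.sum_pair (f := fun m => qq r σ (f1 tm t s) i m)
          (show (0:ℕ) ≠ 1 by norm_num), ← htq]
        exact ENNReal.sum_le_tsum _
      have hterm0 : qq r σ (f1 tm t s) i 0 - ePoi p 0 = 0 := by
        refine tsub_eq_zero_of_le ?_
        have h1 : qq r σ (f1 tm t s) i 0 ≤ 1 - ENNReal.ofReal p :=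
          ENNReal.le_sub_of_add_le_right ENNReal.ofReal_ne_top hsum01
        have h2 : (1 : ℝ≥0∞) - ENNReal.ofReal p = ENNReal.ofReal (1 - p) := by
          rw [ENNReal.ofReal_sub 1 hp0, ENNReal.ofReal_one]
        have h3 : 1 - p ≤ Real.exp (-p) := by
          have := Real.add_one_le_exp (-p)
          linarith
        rw [ePoi_zero_val]
        exact le_trans h1 (by rw [h2]; exact ENNReal.ofReal_le_ofReal h3)
      have hterm1 : qq r σ (f1 tm t s) i 1 - ePoi p 1 ≤ ENNReal.ofReal (r i * p) := by
        rw [hq1, ePoi_one_val, ← ENNReal.ofReal_sub _ (mul_nonneg (Real.exp_pos (-p)).le hp0)]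
        refine ENNReal.ofReal_le_ofReal ?_
        have h3 : 1 - Real.exp (-p) ≤ p := by
          have := Real.add_one_le_exp (-p)
          linarith
        nlinarith [hp0, hple]
      rw [hterm0, zero_add]
      exact hterm1
  calc 2 * ∑' m : ℕ, (qq r σ (f1 tm t s) i m - ePoi p m)
      ≤ 2 * ENNReal.ofReal (r i * p) := mul_le_mul_right hbound 2
    _ = ENNReal.ofReal 2 * ENNReal.ofReal (r i * p) := by norm_num
    _ = ENNReal.ofReal (2 * (r i * p)) := (ENNReal.ofReal_mul (by norm_num)).symm

/-! ### Part 2: joint flows -/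

lemma sum_SIG {β : Type*} [AddCommMonoid β] (G : T → Finset E → β) :
    (∑ c : Σ t : T, {s : Finset E // s ∈ strat t}, G c.1 c.2.val)
      = ∑ t : T, ∑ s ∈ strat t, G t s := by
  rw [← Finset.univ_sigma_univ, Finset.sum_sigma]
  refine Finset.sum_congr rfl fun t _ => ?_
  exact Finset.sum_coe_sort (strat t) (G t)

lemma prod_SIG {β : Type*} [CommMonoid β] (G : T → Finset E → β) :
    (∏ c : Σ t : T, {s : Finset E // s ∈ strat t}, G c.1 c.2.val)
      = ∏ t : T, ∏ s ∈ strat t, G t s := by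
  rw [← Finset.univ_sigma_univ, Finset.prod_sigma]
  refine Finset.prod_congr rfl fun t _ => ?_
  exact Finset.prod_coe_sort (strat t) (G t)

lemma SIG_ext {c c' : Σ t : T, {s : Finset E // s ∈ strat t}}
    (h1 : c.1 = c'.1) (h2 : c.2.val = c'.2.val) : c = c' := by
  rcases c with ⟨t1, s1, hs1⟩
  rcases c' with ⟨t2, s2, hs2⟩
  dsimp at h1 h2
  subst h1
  exact congrArg _ (Subtype.ext h2)

noncomputable def eVec (c : Σ t : T, {s : Finset E // s ∈ strat t}) :
    (Σ t : T, {s : Finset E // s ∈ strat t}) → ℕ :=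
  fun c' => if c' = c then 1 else 0

lemma eVec_self (c : Σ t : T, {s : Finset E // s ∈ strat t}) : eVec strat c c = 1 :=
  if_pos rfl

lemma eVec_ne (c : Σ t : T, {s : Finset E // s ∈ strat t}) {c'} (h : c' ≠ c) :
    eVec strat c c' = 0 := if_neg h

lemma eVec_ne_zero (c : Σ t : T, {s : Finset E // s ∈ strat t}) : eVec strat c ≠ 0 := by
  intro h
  have h1 := congrFun h c
  rw [eVec_self] at h1
  exact one_ne_zero h1

lemma eVec_inj : Function.Injective (eVec strat (E := E) (T := T)) := by
  intro c1 c2 h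
  by_contra hne
  have h1 := congrFun h c1
  rw [eVec_self, eVec_ne strat c2 hne] at h1
  exact one_ne_zero h1

noncomputable def f2 (i : N) (x : Bool × Finset E) :
    (Σ t : T, {s : Finset E // s ∈ strat t}) → ℕ :=
  fun c => if tm i = c.1 ∧ x.1 ∧ x.2 = c.2.val then 1 else 0

noncomputable def μR (i : N) (c : Σ t : T, {s : Finset E // s ∈ strat t}) : ℝ :=
  if tm i = c.1 then r i * σ i c.2.val else 0

noncomputable def μN (i : N) (c : Σ t : T, {s : Finset E // s ∈ strat t}) : ℝ≥0 :=
  (μR strat r σ tm i c).toNNReal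

lemma μR_nonneg (hr1 : ∀ i, 0 < r i) (hσ0 : ∀ i e, 0 ≤ σ i e) (i : N)
    (c : Σ t : T, {s : Finset E // s ∈ strat t}) : 0 ≤ μR strat r σ tm i c := by
  unfold μR
  by_cases h : tm i = c.1
  · rw [if_pos h]; exact mul_nonneg (hr1 i).le (hσ0 i _)
  · rw [if_neg h]

lemma μN_coe (hr1 : ∀ i, 0 < r i) (hσ0 : ∀ i e, 0 ≤ σ i e) (i : N)
    (c : Σ t : T, {s : Finset E // s ∈ strat t}) :
    (μN strat r σ tm i c : ℝ) = μR strat r σ tm i c :=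
  Real.coe_toNNReal _ (μR_nonneg strat r σ tm hr1 hσ0 i c)

lemma sum_μR (hσv : ∀ i e, e ∉ strat (tm i) → σ i e = 0)
    (hσ1 : ∀ i, ∑ s ∈ strat (tm i), σ i s = 1) (i : N) :
    (∑ c : Σ t : T, {s : Finset E // s ∈ strat t}, μR strat r σ tm i c) = r i := by
  rw [show (∑ c : Σ t : T, {s : Finset E // s ∈ strat t}, μR strat r σ tm i c)
      = ∑ t : T, ∑ s' ∈ strat t, (if tm i = t then r i * σ i s' else 0) from
    sum_SIG strat (fun t s' => if tm i = t then r i * σ i s' else 0)]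
  have step : ∀ t : T, (∑ s' ∈ strat t, (if tm i = t then r i * σ i s' else 0))
      = if tm i = t then r i else 0 := by
    intro t
    by_cases htt : tm i = t
    · rw [if_pos htt, Finset.sum_congr rfl (fun s' _ => if_pos htt), ← Finset.mul_sum]
      have h1 : (∑ s' ∈ strat t, σ i s') = 1 := by rw [← htt]; exact hσ1 i
      rw [h1, mul_one]
    · rw [if_neg htt, Finset.sum_congr rfl (fun s' _ => if_neg htt), Finset.sum_const_zero]
  rw [Finset.sum_congr rfl (fun t _ => step t),
    Finset.sum_ite_eq Finset.univ (tm i) (fun _ => r i), if_pos (Finset.mem_univ _)]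

lemma f2_false (i : N) (e : Finset E) : f2 strat tm i (false, e) = 0 :=
  funext fun c => if_neg (fun hc => Bool.false_ne_true hc.2.1)

lemma f2_true_mem (i : N) {e : Finset E} (he : e ∈ strat (tm i)) :
    f2 strat tm i (true, e) = eVec strat ⟨tm i, ⟨e, he⟩⟩ := by
  funext c
  unfold f2 eVec
  by_cases h : c = ⟨tm i, ⟨e, he⟩⟩
  · rw [if_pos h, if_pos]
    subst h
    exact ⟨rfl, rfl, rfl⟩
  · rw [if_neg h, if_neg]
    rintro ⟨h1, -, h3⟩
    exact h (SIG_ext strat h1.symm h3.symm)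

lemma f2_true_not (i : N) {e : Finset E} (he : e ∉ strat (tm i)) :
    f2 strat tm i (true, e) = 0 := by
  funext c
  obtain ⟨t1, s1, hs1⟩ := c
  refine if_neg ?_
  rintro ⟨h1, -, h3⟩
  exact he (by rw [show e = s1 from h3, show tm i = t1 from h1]; exact hs1)

lemma f2_val (i : N) (x : Bool × Finset E) :
    f2 strat tm i x = 0 ∨ ∃ c, f2 strat tm i x = eVec strat c := by
  rcases x with ⟨b, e⟩
  cases b with
  | false => exact Or.inl (f2_false strat tm i e)
  | true =>
    by_cases he : e ∈ strat (tm i)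
    · exact Or.inr ⟨⟨tm i, ⟨e, he⟩⟩, f2_true_mem strat tm i he⟩
    · exact Or.inl (f2_true_not strat tm i he)

lemma qq_f2_not (i : N) (m : (Σ t : T, {s : Finset E // s ∈ strat t}) → ℕ)
    (hm0 : m ≠ 0) (hmv : ∀ c, m ≠ eVec strat c) : qq r σ (f2 strat tm) i m = 0 := by
  refine qq_le_one_of r σ fun x => ?_
  rcases f2_val strat tm i x with h | ⟨c, h⟩
  · rw [h]; exact fun hc => hm0 hc.symm
  · rw [h]; exact fun hc => hmv c hc.symm

lemma qq_f2_eVec (hσv : ∀ i e, e ∉ strat (tm i) → σ i e = 0) (i : N)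
    (c : Σ t : T, {s : Finset E // s ∈ strat t}) :
    qq r σ (f2 strat tm) i (eVec strat c) = ENNReal.ofReal (μR strat r σ tm i c) := by
  have hqq : qq r σ (f2 strat tm) i (eVec strat c)
      = ∑ x : Bool × Finset E,
          (if f2 strat tm i x = eVec strat c then W r σ i x else 0) :=
    Finset.sum_congr rfl fun x _ => iteInst _ _ _ _
  rw [hqq, Fintype.sum_prod_type, Fintype.sum_bool]
  have hfalse : (∑ e : Finset E,
      (if f2 strat tm i (false, e) = eVec strat c then W r σ i (false, e) else 0)) = 0 := by
    refine Finset.sum_eq_zero fun e _ => if_neg (fun hc => ?_)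
    rw [f2_false] at hc
    exact eVec_ne_zero strat c hc.symm
  rw [hfalse, add_zero]
  have step : ∀ e : Finset E,
      (if f2 strat tm i (true, e) = eVec strat c then W r σ i (true, e) else 0)
        = if (tm i = c.1 ∧ e = c.2.val) then ENNReal.ofReal (r i * σ i e) else 0 := by
    intro e
    by_cases he : e ∈ strat (tm i)
    · rw [f2_true_mem strat tm i he]
      by_cases h : tm i = c.1 ∧ e = c.2.val
      · rw [if_pos h, if_pos]
        · rfl
        · exact congrArg (eVec strat) (SIG_ext strat h.1 h.2)
      · rw [if_neg h, if_neg]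
        intro hc
        have := eVec_inj strat hc
        exact h ⟨(congrArg Sigma.fst this).symm ▸ rfl, by rw [← this]⟩
    · rw [f2_true_not strat tm i he]
      rw [if_neg (fun hc => eVec_ne_zero strat c hc.symm), if_neg]
      obtain ⟨t1, s1, hs1⟩ := c
      rintro ⟨h1, h2⟩
      exact he (by rw [show e = s1 from h2, show tm i = t1 from h1]; exact hs1)
  rw [Finset.sum_congr rfl (fun e _ => step e)]
  by_cases ht : tm i = c.1
  · have step2 : ∀ e : Finset E,
        (if (tm i = c.1 ∧ e = c.2.val) then ENNReal.ofReal (r i * σ i e) else 0)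
          = if e = c.2.val then ENNReal.ofReal (r i * σ i e) else 0 := by
      intro e
      by_cases he : e = c.2.val
      · rw [if_pos ⟨ht, he⟩, if_pos he]
      · rw [if_neg (fun hc => he hc.2), if_neg he]
    rw [Finset.sum_congr rfl (fun e _ => step2 e),
      Finset.sum_ite_eq' Finset.univ c.2.val (fun e => ENNReal.ofReal (r i * σ i e)),
      if_pos (Finset.mem_univ _)]
    unfold μR
    rw [if_pos ht]
  · rw [Finset.sum_eq_zero (fun e _ => if_neg (fun hc => ht hc.1))]
    unfold μR
    rw [if_neg ht, ENNReal.ofReal_zero]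

lemma prodPoiN_zero_val (hr1 : ∀ i, 0 < r i) (hσ0 : ∀ i e, 0 ≤ σ i e)
    (hσv : ∀ i e, e ∉ strat (tm i) → σ i e = 0)
    (hσ1 : ∀ i, ∑ s ∈ strat (tm i), σ i s = 1) (i : N) :
    prodPoiN (μN strat r σ tm i) 0 = ENNReal.ofReal (Real.exp (-(r i))) := by
  unfold prodPoiN
  have step : ∀ c, ePoiN (μN strat r σ tm i c) ((0 : (Σ t : T, {s : Finset E // s ∈ strat t}) → ℕ) c)
      = ENNReal.ofReal (Real.exp (-(μR strat r σ tm i c))) := by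
    intro c
    show ePoiN (μN strat r σ tm i c) 0 = _
    unfold ePoiN
    rw [μN_coe strat r σ tm hr1 hσ0, ePoi_zero_val]
  rw [Finset.prod_congr rfl (fun c _ => step c),
    ← ofReal_prod' Finset.univ _ (fun c _ => (Real.exp_pos _).le), ← Real.exp_sum,
    Finset.sum_neg_distrib, sum_μR strat r σ tm hσv hσ1 i]

lemma prodPoiN_eVec_val (hr1 : ∀ i, 0 < r i) (hσ0 : ∀ i e, 0 ≤ σ i e)
    (hσv : ∀ i e, e ∉ strat (tm i) → σ i e = 0)
    (hσ1 : ∀ i, ∑ s ∈ strat (tm i), σ i s = 1) (i : N)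
    (c : Σ t : T, {s : Finset E // s ∈ strat t}) :
    prodPoiN (μN strat r σ tm i) (eVec strat c)
      = ENNReal.ofReal (μR strat r σ tm i c * Real.exp (-(r i))) := by
  unfold prodPoiN
  rw [← Finset.mul_prod_erase Finset.univ _ (Finset.mem_univ c)]
  have h1 : ePoiN (μN strat r σ tm i c) (eVec strat c c)
      = ENNReal.ofReal (Real.exp (-(μR strat r σ tm i c)) * μR strat r σ tm i c) := by
    rw [eVec_self]
    unfold ePoiN
    rw [μN_coe strat r σ tm hr1 hσ0, ePoi_one_val]
  have h2 : (∏ c' ∈ Finset.univ.erase c, ePoiN (μN strat r σ tm i c') (eVec strat c c'))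
      = ENNReal.ofReal (Real.exp (-(∑ c' ∈ Finset.univ.erase c, μR strat r σ tm i c'))) := by
    have step : ∀ c' ∈ Finset.univ.erase c, ePoiN (μN strat r σ tm i c') (eVec strat c c')
        = ENNReal.ofReal (Real.exp (-(μR strat r σ tm i c'))) := by
      intro c' hc'
      rw [eVec_ne strat c (Finset.ne_of_mem_erase hc')]
      unfold ePoiN
      rw [μN_coe strat r σ tm hr1 hσ0, ePoi_zero_val]
    rw [Finset.prod_congr rfl step, ← ofReal_prod' _ _ (fun c' _ => (Real.exp_pos _).le),
      ← Real.exp_sum, Finset.sum_neg_distrib]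
  rw [h1, h2, ← ENNReal.ofReal_mul (mul_nonneg (Real.exp_pos _).le
    (μR_nonneg strat r σ tm hr1 hσ0 i c))]
  congr 1
  have hsum : μR strat r σ tm i c + (∑ c' ∈ Finset.univ.erase c, μR strat r σ tm i c')
      = r i :=
    (Finset.add_sum_erase Finset.univ (μR strat r σ tm i) (Finset.mem_univ c)).trans
      (sum_μR strat r σ tm hσv hσ1 i)
  rw [← hsum, neg_add, Real.exp_add]
  ring

lemma dL1_qq_f2 (hr1 : ∀ i, 0 < r i) (hr2 : ∀ i, r i < 1) (hσ0 : ∀ i e, 0 ≤ σ i e)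
    (hσv : ∀ i e, e ∉ strat (tm i) → σ i e = 0)
    (hσ1 : ∀ i, ∑ s ∈ strat (tm i), σ i s = 1) (i : N) :
    dL1 (qq r σ (f2 strat tm) i) (prodPoiN (μN strat r σ tm i))
      ≤ ENNReal.ofReal (2 * (r i * r i)) := by
  have htq : ∑' m, qq r σ (f2 strat tm) i m = 1 :=
    tsum_qq strat r σ tm hr1 hr2 hσ0 hσv hσ1 _ i
  have htp : ∑' m, prodPoiN (μN strat r σ tm i) m = 1 := tsum_prodPoiN _
  rw [dL1_eq_two_tsub htq htp]
  have h0S : (0 : (Σ t : T, {s : Finset E // s ∈ strat t}) → ℕ)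
      ∉ Finset.image (eVec strat) Finset.univ := by
    intro h
    obtain ⟨c, -, hc⟩ := Finset.mem_image.1 h
    exact eVec_ne_zero strat c hc
  have hinj : ∀ c1 ∈ Finset.univ, ∀ c2 ∈ Finset.univ,
      eVec strat c1 = eVec strat c2 → c1 = c2 := fun c1 _ c2 _ h => eVec_inj strat h
  have hq1sum : (∑ c, qq r σ (f2 strat tm) i (eVec strat c)) = ENNReal.ofReal (r i) := by
    rw [Finset.sum_congr rfl (fun c _ => qq_f2_eVec strat r σ tm hσv i c),
      ← ENNReal.ofReal_sum_of_nonneg (fun c _ => μR_nonneg strat r σ tm hr1 hσ0 i c),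
      sum_μR strat r σ tm hσv hσ1 i]
  have hbound : (∑' m, (qq r σ (f2 strat tm) i m - prodPoiN (μN strat r σ tm i) m))
      ≤ ENNReal.ofReal (r i * r i) := by
    refine le_trans (le_of_eq (tsum_eq_sum
      (s := insert 0 (Finset.image (eVec strat) Finset.univ)) (fun m hm => ?_))) ?_
    · have hm0 : m ≠ 0 := fun h => hm (h ▸ Finset.mem_insert_self _ _)
      have hmv : ∀ c, m ≠ eVec strat c := fun c h =>
        hm (h ▸ Finset.mem_insert_of_mem (Finset.mem_image_of_mem _ (Finset.mem_univ c)))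
      rw [qq_f2_not strat r σ tm i m hm0 hmv, zero_tsub]
    · rw [Finset.sum_insert h0S, Finset.sum_image hinj]
      have hterm0 : qq r σ (f2 strat tm) i 0 - prodPoiN (μN strat r σ tm i) 0 = 0 := by
        refine tsub_eq_zero_of_le ?_
        have hsum01 : qq r σ (f2 strat tm) i 0 + ENNReal.ofReal (r i) ≤ 1 := by
          rw [← hq1sum, ← Finset.sum_image hinj, ← Finset.sum_insert h0S, ← htq]
          exact ENNReal.sum_le_tsum _
        have h1 : qq r σ (f2 strat tm) i 0 ≤ 1 - ENNReal.ofReal (r i) :=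
          ENNReal.le_sub_of_add_le_right ENNReal.ofReal_ne_top hsum01
        rw [prodPoiN_zero_val strat r σ tm hr1 hσ0 hσv hσ1 i]
        refine le_trans h1 ?_
        rw [← ENNReal.ofReal_one, ← ENNReal.ofReal_sub _ (hr1 i).le]
        exact ENNReal.ofReal_le_ofReal
          (by have := Real.add_one_le_exp (-(r i)); linarith)
      rw [hterm0, zero_add]
      have hterm : ∀ c, qq r σ (f2 strat tm) i (eVec strat c)
          - prodPoiN (μN strat r σ tm i) (eVec strat c)
          ≤ ENNReal.ofReal (μR strat r σ tm i c * r i) := by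
        intro c
        rw [qq_f2_eVec strat r σ tm hσv i c,
          prodPoiN_eVec_val strat r σ tm hr1 hσ0 hσv hσ1 i c,
          ← ENNReal.ofReal_sub _ (mul_nonneg (μR_nonneg strat r σ tm hr1 hσ0 i c)
            (Real.exp_pos _).le)]
        refine ENNReal.ofReal_le_ofReal ?_
        have hμ0 := μR_nonneg strat r σ tm hr1 hσ0 i c
        have h3 : 1 - Real.exp (-(r i)) ≤ r i := by
          have := Real.add_one_le_exp (-(r i)); linarith
        nlinarith
      refine le_trans (Finset.sum_le_sum (fun c _ => hterm c)) ?_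
      rw [← ENNReal.ofReal_sum_of_nonneg
        (fun c _ => mul_nonneg (μR_nonneg strat r σ tm hr1 hσ0 i c) (hr1 i).le),
        ← Finset.sum_mul, sum_μR strat r σ tm hσv hσ1 i]
  calc 2 * ∑' m, (qq r σ (f2 strat tm) i m - prodPoiN (μN strat r σ tm i) m)
      ≤ 2 * ENNReal.ofReal (r i * r i) := mul_le_mul_right hbound 2
    _ = ENNReal.ofReal 2 * ENNReal.ofReal (r i * r i) := by norm_num
    _ = ENNReal.ofReal (2 * (r i * r i)) := (ENNReal.ofReal_mul (by norm_num)).symm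

lemma part1_dL1 (hr1 : ∀ i, 0 < r i) (hr2 : ∀ i, r i < 1) (hσ0 : ∀ i e, 0 ≤ σ i e)
    (hσv : ∀ i e, e ∉ strat (tm i) → σ i e = 0)
    (hσ1 : ∀ i, ∑ s ∈ strat (tm i), σ i s = 1)
    {t : T} {s : Finset E} (hs : s ∈ strat t) :
    dL1 (bigConv (qq r σ (f1 tm t s))) (ePoi (∑ i, pP r σ tm t s i))
      ≤ ENNReal.ofReal (∑ i, 2 * (r i * pP r σ tm t s i)) := by
  have hmid : bigConv (fun i => ePoi (pP r σ tm t s i)) = ePoi (∑ i, pP r σ tm t s i) := by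
    have h1 : (fun i => ePoi (pP r σ tm t s i))
        = fun i => ePoiN ((pP r σ tm t s i).toNNReal) := by
      funext i
      unfold ePoiN
      rw [Real.coe_toNNReal _ (pP_nonneg r σ tm hr1 hσ0 t s i)]
    rw [h1, bigConv_ePoiN]
    unfold ePoiN
    refine congrArg ePoi ?_
    rw [NNReal.coe_sum]
    exact Finset.sum_congr rfl fun i _ =>
      Real.coe_toNNReal _ (pP_nonneg r σ tm hr1 hσ0 t s i)
  rw [← hmid]
  refine le_trans (bigConv_dL1
    (fun i => le_of_eq (tsum_qq strat r σ tm hr1 hr2 hσ0 hσv hσ1 _ i))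
    (fun i => le_of_eq (tsum_ePoi (pP_nonneg r σ tm hr1 hσ0 t s i)))) ?_
  refine le_trans (Finset.sum_le_sum
    (fun i _ => dL1_qq_f1 strat r σ tm hr1 hr2 hσ0 hσv hσ1 hs i)) ?_
  rw [← ENNReal.ofReal_sum_of_nonneg (fun i _ => by
    have h1 := (hr1 i).le
    have h2 := pP_nonneg r σ tm hr1 hσ0 t s i
    positivity)]

lemma part2_dL1 (hr1 : ∀ i, 0 < r i) (hr2 : ∀ i, r i < 1) (hσ0 : ∀ i e, 0 ≤ σ i e)
    (hσv : ∀ i e, e ∉ strat (tm i) → σ i e = 0)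
    (hσ1 : ∀ i, ∑ s ∈ strat (tm i), σ i s = 1) :
    dL1 (bigConv (qq r σ (f2 strat tm)))
        (prodPoiN (fun c => (∑ i, μR strat r σ tm i c).toNNReal))
      ≤ ENNReal.ofReal (∑ i, 2 * (r i * r i)) := by
  have harg : (∑ i, μN strat r σ tm i)
      = (fun c => (∑ i, μR strat r σ tm i c).toNNReal) := by
    funext c
    refine NNReal.coe_injective ?_
    rw [Real.coe_toNNReal _ (Finset.sum_nonneg
      (fun i _ => μR_nonneg strat r σ tm hr1 hσ0 i c))]
    rw [show ((∑ i, μN strat r σ tm i) c : ℝ) = ∑ i, (μN strat r σ tm i c : ℝ) from by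
      rw [Finset.sum_apply]; exact NNReal.coe_sum _ _]
    exact Finset.sum_congr rfl fun i _ => μN_coe strat r σ tm hr1 hσ0 i c
  have hmid : bigConv (fun i => prodPoiN (μN strat r σ tm i))
      = prodPoiN (fun c => (∑ i, μR strat r σ tm i c).toNNReal) := by
    rw [bigConv_prodPoiN, harg]
  rw [← hmid]
  refine le_trans (bigConv_dL1
    (fun i => le_of_eq (tsum_qq strat r σ tm hr1 hr2 hσ0 hσv hσ1 _ i))
    (fun i => le_of_eq (tsum_prodPoiN _))) ?_
  refine le_trans (Finset.sum_le_sum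
    (fun i _ => dL1_qq_f2 strat r σ tm hr1 hr2 hσ0 hσv hσ1 i)) ?_
  rw [← ENNReal.ofReal_sum_of_nonneg (fun i _ => by
    have h1 := (hr1 i).le
    positivity)]

end Hyps

end Model

/-! ### real conversions -/

lemma toReal_abs_sub {A B : ℝ≥0∞} (hA : A ≠ ⊤) (hB : B ≠ ⊤) :
    |A.toReal - B.toReal| = ((A - B) + (B - A)).toReal := by
  rcases le_total A B with h | h
  · rw [tsub_eq_zero_of_le h, zero_add, ENNReal.toReal_sub_of_le h hB, abs_sub_comm,
      abs_of_nonneg (sub_nonneg.2 (ENNReal.toReal_mono hB h))]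
  · rw [tsub_eq_zero_of_le h, add_zero, ENNReal.toReal_sub_of_le h hA,
      abs_of_nonneg (sub_nonneg.2 (ENNReal.toReal_mono hA h))]

lemma tsum_abs_eq_toReal_dL1 {X : Type*} {f g : X → ℝ≥0∞}
    (hf : ∀ k, f k ≠ ⊤) (hg : ∀ k, g k ≠ ⊤) :
    ∑' k, |(f k).toReal - (g k).toReal| = (dL1 f g).toReal := by
  calc ∑' k, |(f k).toReal - (g k).toReal|
      = ∑' k, ((f k - g k) + (g k - f k)).toReal :=
        tsum_congr fun k => toReal_abs_sub (hf k) (hg k)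
    _ = (dL1 f g).toReal := by
        rw [dL1, ENNReal.tsum_toReal_eq (fun k => ENNReal.add_ne_top.2
          ⟨ne_top_of_le_ne_top (hf k) tsub_le_self, ne_top_of_le_ne_top (hg k) tsub_le_self⟩)]

end PLA

open scoped ENNReal NNReal

open PLA

/-- Poisson limit of Bernoulli congestion games: if the number of players tends to infinity,
the maximal participation probability tends to zero, and the expected flows converge to
`y_{t,s}`, then each random strategy flow converges in total variation to a
`Poisson(y_{t,s})` law, and the limiting family is mutually independent (the joint law
converges to the product of the Poisson laws). -/
theorem stmt15 {E T : Type*} [Fintype E] [Fintype T]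
    (strat : T → Finset (Finset E))
    (P : ℕ → Type) [∀ n, Fintype (P n)]
    (r : ∀ n, P n → ℝ) (hr : ∀ n i, 0 < r n i ∧ r n i < 1)
    (tm : ∀ n, P n → T)
    (hcard : Tendsto (fun n => (Fintype.card (P n) : ℝ)) atTop atTop)
    (hrmax : ∀ ε > (0 : ℝ), ∀ᶠ n in atTop, ∀ i : P n, r n i < ε)
    (σ : ∀ n, P n → Finset E → ℝ) (hmix : ∀ n, IsMixed strat (tm n) (σ n))
    (y : T → Finset E → ℝ)
    (hy : ∀ t, ∀ s ∈ strat t,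
      Tendsto (fun n => ∑ i : P n, if tm n i = t then r n i * σ n i s else 0)
        atTop (nhds (y t s))) :
    (∀ t, ∀ s ∈ strat t,
      Tendsto (fun n => (1 / 2) * ∑' k : ℕ,
          |bexpVal (r n) (σ n)
              (fun u a => if bflow (tm n) t s u a = k then 1 else 0) -
            poiPMF (y t s) k|)
        atTop (nhds 0)) ∧
    (∀ k : T → Finset E → ℕ,
      Tendsto (fun n => bexpVal (r n) (σ n)
          (fun u a => if ∀ t, ∀ s ∈ strat t, bflow (tm n) t s u a = k t s then 1 else 0))
        atTop (nhds (∏ t, ∏ s ∈ strat t, poiPMF (y t s) (k t s)))) := by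
  have hr1 : ∀ n i, 0 < r n i := fun n i => (hr n i).1
  have hr2 : ∀ n i, r n i < 1 := fun n i => (hr n i).2
  have hσ0 : ∀ n i e, 0 ≤ σ n i e := fun n => (hmix n).1
  have hσv : ∀ n i e, e ∉ strat (tm n i) → σ n i e = 0 := fun n => (hmix n).2.1
  have hσ1 : ∀ n i, ∑ s ∈ strat (tm n i), σ n i s = 1 := fun n => (hmix n).2.2
  -- convergence of pP-sums
  have hy' : ∀ t, ∀ s ∈ strat t,
      Tendsto (fun n => ∑ i, pP (r n) (σ n) (tm n) t s i) atTop (nhds (y t s)) :=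
    fun t s hs => hy t s hs
  have hy0 : ∀ t, ∀ s ∈ strat t, 0 ≤ y t s := fun t s hs =>
    ge_of_tendsto' (hy' t s hs) (fun n => Finset.sum_nonneg fun i _ =>
      pP_nonneg (r n) (σ n) (tm n) (hr1 n) (hσ0 n) t s i)
  -- total mass identity and convergence
  have hRid : ∀ n, (∑ i, r n i) = ∑ t, ∑ s ∈ strat t, ∑ i, pP (r n) (σ n) (tm n) t s i := by
    intro n
    symm
    calc ∑ t, ∑ s ∈ strat t, ∑ i, pP (r n) (σ n) (tm n) t s i
        = ∑ t, ∑ i, ∑ s ∈ strat t, pP (r n) (σ n) (tm n) t s i :=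
          Finset.sum_congr rfl fun t _ => Finset.sum_comm
      _ = ∑ t, ∑ i, (if tm n i = t then r n i else 0) := by
          refine Finset.sum_congr rfl fun t _ => Finset.sum_congr rfl fun i _ => ?_
          unfold pP
          by_cases h : tm n i = t
          · rw [Finset.sum_congr rfl (fun s' _ => if_pos h), ← Finset.mul_sum, if_pos h]
            have h1 : (∑ s' ∈ strat t, σ n i s') = 1 := by rw [← h]; exact hσ1 n i
            rw [h1, mul_one]
          · rw [Finset.sum_congr rfl (fun s' _ => if_neg h), Finset.sum_const_zero, if_neg h]
      _ = ∑ i, ∑ t, (if tm n i = t then r n i else 0) := Finset.sum_comm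
      _ = ∑ i, r n i := by
          refine Finset.sum_congr rfl fun i _ => ?_
          rw [Finset.sum_ite_eq Finset.univ (tm n i) (fun _ => r n i),
            if_pos (Finset.mem_univ _)]
  have hRto : Tendsto (fun n => ∑ i, r n i) atTop
      (nhds (∑ t, ∑ s ∈ strat t, y t s)) := by
    rw [show (fun n => ∑ i, r n i)
        = fun n => ∑ t, ∑ s ∈ strat t, ∑ i, pP (r n) (σ n) (tm n) t s i from
      funext hRid]
    exact tendsto_finset_sum _ fun t _ => tendsto_finset_sum _ fun s hs => hy' t s hs
  set Y : ℝ := ∑ t, ∑ s ∈ strat t, y t s with hYdef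
  have hY0 : 0 ≤ Y := Finset.sum_nonneg fun t _ => Finset.sum_nonneg fun s hs => hy0 t s hs
  set C : ℝ := Y + 1 with hCdef
  have hCpos : 0 < C := by simp only [hCdef]; linarith
  have hRev : ∀ᶠ n in atTop, (∑ i, r n i) < C :=
    Tendsto.eventually_lt_const (by simp only [hCdef]; linarith) hRto
  constructor
  · -- Part 1
    intro t s hs
    set D : ℕ → ℝ≥0∞ := fun n =>
      dL1 (bigConv (qq (r n) (σ n) (f1 (tm n) t s))) (ePoi (y t s)) with hDdef
    have hGle : ∀ n k', bigConv (qq (r n) (σ n) (f1 (tm n) t s)) k' ≤ 1 := by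
      intro n k'
      refine le_trans (ENNReal.le_tsum k') (tsum_bigConv_le fun i => le_of_eq ?_)
      exact tsum_qq strat (r n) (σ n) (tm n) (hr1 n) (hr2 n) (hσ0 n) (hσv n) (hσ1 n) _ i
    have hkey : ∀ n k', ENNReal.ofReal (bexpVal (r n) (σ n)
        (fun u a => if bflow (tm n) t s u a = k' then 1 else 0))
        = bigConv (qq (r n) (σ n) (f1 (tm n) t s)) k' := by
      intro n k'
      refine ofReal_bexpVal (r n) (σ n) (hr1 n) (hr2 n) (hσ0 n) (f1 (tm n) t s) k' _ ?_ ?_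
      · intro u a h
        exact if_pos ((show bflow (tm n) t s u a
          = ∑ i, f1 (tm n) t s i (u i, a i) from rfl).trans h)
      · intro u a h
        exact if_neg (fun hc => h ((show bflow (tm n) t s u a
          = ∑ i, f1 (tm n) t s i (u i, a i) from rfl).symm.trans hc))
    have hstep : (fun n => (1 / 2 : ℝ) * ∑' k' : ℕ,
        |bexpVal (r n) (σ n) (fun u a => if bflow (tm n) t s u a = k' then 1 else 0) -
          poiPMF (y t s) k'|) = fun n => (1 / 2) * (D n).toReal := by
      funext n
      congr 1
      have hk : ∀ k' : ℕ, |bexpVal (r n) (σ n)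
          (fun u a => if bflow (tm n) t s u a = k' then 1 else 0) - poiPMF (y t s) k'|
          = |(bigConv (qq (r n) (σ n) (f1 (tm n) t s)) k').toReal
              - (ePoi (y t s) k').toReal| := by
        intro k'
        have hB : bexpVal (r n) (σ n)
            (fun u a => if bflow (tm n) t s u a = k' then 1 else 0)
            = (bigConv (qq (r n) (σ n) (f1 (tm n) t s)) k').toReal := by
          rw [← hkey n k', ENNReal.toReal_ofReal]
          refine bexpVal_nonneg (r n) (σ n) (hr1 n) (hr2 n) (hσ0 n) _ fun u a => ?_
          by_cases h : bflow (tm n) t s u a = k'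
          · rw [if_pos h]; norm_num
          · rw [if_neg h]
        rw [hB, show poiPMF (y t s) k' = (ePoi (y t s) k').toReal from
          (ENNReal.toReal_ofReal (poiPMF_nonneg (hy0 t s hs) k')).symm]
      rw [tsum_congr hk]
      exact tsum_abs_eq_toReal_dL1
        (fun k' => ne_top_of_le_ne_top ENNReal.one_ne_top (hGle n k'))
        (fun k' => ENNReal.ofReal_ne_top)
    rw [hstep]
    rw [Metric.tendsto_atTop]
    intro ε hε
    set δ : ℝ := ε / (4 * C) with hδdef
    have hδpos : 0 < δ := by positivity
    have hδ' : (0:ℝ) < ε / 4 := by positivity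
    have h1 : ∀ᶠ n in atTop, |(∑ i, pP (r n) (σ n) (tm n) t s i) - y t s| < ε / 4 := by
      have h := Metric.tendsto_nhds.1 (hy' t s hs) (ε / 4) hδ'
      filter_upwards [h] with n hn
      rwa [Real.dist_eq] at hn
    have hcomb := (hrmax δ hδpos).and (h1.and hRev)
    obtain ⟨Nb, hNb⟩ := Filter.eventually_atTop.1 hcomb
    refine ⟨Nb, fun n hn => ?_⟩
    obtain ⟨hrn, hyn, hRn⟩ := hNb n hn
    -- bound D n
    set lamn : ℝ := ∑ i, pP (r n) (σ n) (tm n) t s i with hlamdef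
    have hlam0 : 0 ≤ lamn := Finset.sum_nonneg fun i _ =>
      pP_nonneg (r n) (σ n) (tm n) (hr1 n) (hσ0 n) t s i
    have hD : D n ≤ ENNReal.ofReal (∑ i, 2 * (r n i * pP (r n) (σ n) (tm n) t s i))
        + ENNReal.ofReal (2 * |lamn - y t s|) := by
      refine le_trans (dL1_triangle _ (ePoi lamn) _) (add_le_add ?_ ?_)
      · exact part1_dL1 strat (r n) (σ n) (tm n) (hr1 n) (hr2 n) (hσ0 n) (hσv n) (hσ1 n) hs
      · exact dL1_ePoi_le hlam0 (hy0 t s hs)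
    have hb1 : (∑ i, 2 * (r n i * pP (r n) (σ n) (tm n) t s i)) ≤ 2 * (δ * C) := by
      have hper : ∀ i, 2 * (r n i * pP (r n) (σ n) (tm n) t s i) ≤ 2 * (δ * r n i) := by
        intro i
        have hp0 := pP_nonneg (r n) (σ n) (tm n) (hr1 n) (hσ0 n) t s i
        have hple := pP_le_r strat (r n) (σ n) (tm n) (hr1 n) (hσ0 n) (hσ1 n) hs i
        have := hrn i
        nlinarith [(hr1 n i).le]
      calc (∑ i, 2 * (r n i * pP (r n) (σ n) (tm n) t s i))
          ≤ ∑ i, 2 * (δ * r n i) := Finset.sum_le_sum fun i _ => hper i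
        _ = 2 * (δ * ∑ i, r n i) := by rw [← Finset.mul_sum, ← Finset.mul_sum]
        _ ≤ 2 * (δ * C) := by nlinarith [hRn, hδpos.le]
    have hb2 : 2 * |lamn - y t s| ≤ 2 * (ε / 4) := by nlinarith [hyn]
    have hDle : D n ≤ ENNReal.ofReal (2 * (δ * C) + 2 * (ε / 4)) := by
      refine le_trans hD ?_
      rw [ENNReal.ofReal_add (by positivity) (by positivity)]
      exact add_le_add (ENNReal.ofReal_le_ofReal hb1) (ENNReal.ofReal_le_ofReal hb2)
    have htr : (D n).toReal ≤ 2 * (δ * C) + 2 * (ε / 4) :=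
      ENNReal.toReal_le_of_le_ofReal (by positivity) hDle
    have hδC : δ * C = ε / 4 := by
      rw [hδdef]
      field_simp
    rw [Real.dist_eq, sub_zero, abs_of_nonneg (by positivity)]
    calc (1/2 : ℝ) * (D n).toReal ≤ (1/2) * (2 * (δ * C) + 2 * (ε / 4)) := by linarith
      _ = ε / 2 := by rw [hδC]; ring
      _ < ε := by linarith
  · -- Part 2
    intro k
    set kv : (Σ t : T, {s : Finset E // s ∈ strat t}) → ℕ := fun c => k c.1 c.2.val with hkvdef
    set yN : (Σ t : T, {s : Finset E // s ∈ strat t}) → ℝ≥0 :=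
      fun c => (y c.1 c.2.val).toNNReal with hyNdef
    have hL : (∏ t, ∏ s ∈ strat t, poiPMF (y t s) (k t s)) = (prodPoiN yN kv).toReal := by
      calc (∏ t, ∏ s ∈ strat t, poiPMF (y t s) (k t s))
          = ∏ c : Σ t : T, {s : Finset E // s ∈ strat t},
              poiPMF (y c.1 c.2.val) (k c.1 c.2.val) :=
            (prod_SIG strat (fun t' s' => poiPMF (y t' s') (k t' s'))).symm
        _ = ∏ c : Σ t : T, {s : Finset E // s ∈ strat t}, (ePoiN (yN c) (kv c)).toReal := by
            refine Finset.prod_congr rfl fun c _ => ?_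
            have h1 : ePoiN (yN c) (kv c)
                = ENNReal.ofReal (poiPMF (y c.1 c.2.val) (k c.1 c.2.val)) := by
              unfold ePoiN
              rw [show (yN c : ℝ) = y c.1 c.2.val from
                Real.coe_toNNReal _ (hy0 c.1 c.2.val c.2.property)]
              rfl
            rw [h1, ENNReal.toReal_ofReal (poiPMF_nonneg (hy0 c.1 c.2.val c.2.property) _)]
        _ = (∏ c : Σ t : T, {s : Finset E // s ∈ strat t}, ePoiN (yN c) (kv c)).toReal :=
            (ENNReal.toReal_prod _ _).symm
        _ = (prodPoiN yN kv).toReal := rfl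
    set D2 : ℕ → ℝ≥0∞ := fun n =>
      dL1 (bigConv (qq (r n) (σ n) (f2 strat (tm n)))) (prodPoiN yN) with hD2def
    have htsq : ∀ n, ∑' kk, bigConv (qq (r n) (σ n) (f2 strat (tm n))) kk ≤ 1 := fun n =>
      tsum_bigConv_le fun i => le_of_eq
        (tsum_qq strat (r n) (σ n) (tm n) (hr1 n) (hr2 n) (hσ0 n) (hσv n) (hσ1 n) _ i)
    have hD2ne : ∀ n, D2 n ≠ ⊤ := fun n =>
      ne_top_of_le_ne_top (by norm_num)
        (dL1_le_two (htsq n) (le_of_eq (tsum_prodPoiN yN)))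
    have hkey2 : ∀ n, ENNReal.ofReal (bexpVal (r n) (σ n)
        (fun u a => if (∀ t, ∀ s ∈ strat t, bflow (tm n) t s u a = k t s) then 1 else 0))
        = bigConv (qq (r n) (σ n) (f2 strat (tm n))) kv := by
      intro n
      have hcond : ∀ (u : P n → Bool) (a : P n → Finset E),
          (∀ t, ∀ s ∈ strat t, bflow (tm n) t s u a = k t s)
            ↔ (∑ i, f2 strat (tm n) i (u i, a i)) = kv := by
        intro u a
        have heval : ∀ c : Σ t : T, {s : Finset E // s ∈ strat t},
            (∑ i, f2 strat (tm n) i (u i, a i)) c = bflow (tm n) c.1 c.2.val u a := by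
          intro c
          rw [Finset.sum_apply]
          rfl
        constructor
        · intro h
          funext c
          rw [heval c]
          exact h c.1 c.2.val c.2.property
        · intro h t' s' hs'
          have h2 := congrFun h ⟨t', ⟨s', hs'⟩⟩
          rw [heval] at h2
          exact h2
      exact ofReal_bexpVal (r n) (σ n) (hr1 n) (hr2 n) (hσ0 n) (f2 strat (tm n)) kv _
        (fun u a h => if_pos ((hcond u a).2 h))
        (fun u a h => if_neg (fun hc => h ((hcond u a).1 hc)))
    have habs : ∀ n, |bexpVal (r n) (σ n)
        (fun u a => if (∀ t, ∀ s ∈ strat t, bflow (tm n) t s u a = k t s) then 1 else 0)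
        - (∏ t, ∏ s ∈ strat t, poiPMF (y t s) (k t s))| ≤ (D2 n).toReal := by
      intro n
      rw [hL]
      have hBn : bexpVal (r n) (σ n)
          (fun u a => if (∀ t, ∀ s ∈ strat t, bflow (tm n) t s u a = k t s) then 1 else 0)
          = (bigConv (qq (r n) (σ n) (f2 strat (tm n))) kv).toReal := by
        rw [← hkey2 n, ENNReal.toReal_ofReal]
        refine bexpVal_nonneg (r n) (σ n) (hr1 n) (hr2 n) (hσ0 n) _ fun u a => ?_
        by_cases h : ∀ t, ∀ s ∈ strat t, bflow (tm n) t s u a = k t s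
        · rw [if_pos h]; norm_num
        · rw [if_neg h]
      rw [hBn, toReal_abs_sub
        (ne_top_of_le_ne_top ENNReal.one_ne_top
          (le_trans (ENNReal.le_tsum kv) (htsq n)))
        (ne_top_of_le_ne_top ENNReal.one_ne_top
          (le_trans (ENNReal.le_tsum kv) (le_of_eq (tsum_prodPoiN yN))))]
      exact ENNReal.toReal_mono (hD2ne n) (le_dL1 _ _ kv)
    set Sd : ℕ → ℝ := fun n => ∑ c : Σ t : T, {s : Finset E // s ∈ strat t},
      |(∑ i, μR strat (r n) (σ n) (tm n) i c) - y c.1 c.2.val| with hSddef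
    have hSd0 : ∀ n, 0 ≤ Sd n := fun n => Finset.sum_nonneg fun c _ => abs_nonneg _
    have hSdto : Tendsto Sd atTop (nhds 0) := by
      have h1 : ∀ c : Σ t : T, {s : Finset E // s ∈ strat t},
          Tendsto (fun n => |(∑ i, μR strat (r n) (σ n) (tm n) i c) - y c.1 c.2.val|)
            atTop (nhds 0) := by
        intro c
        have h2 : Tendsto (fun n => ∑ i, μR strat (r n) (σ n) (tm n) i c) atTop
            (nhds (y c.1 c.2.val)) := hy' c.1 c.2.val c.2.property
        have h3 : Tendsto (fun n => |(∑ i, μR strat (r n) (σ n) (tm n) i c) - y c.1 c.2.val|)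
            atTop (nhds |y c.1 c.2.val - y c.1 c.2.val|) := (h2.sub tendsto_const_nhds).abs
        simpa using h3
      have := tendsto_finset_sum Finset.univ (fun c _ => h1 c)
      simpa using this
    rw [Metric.tendsto_atTop]
    intro ε hε
    set δ : ℝ := ε / (8 * C) with hδdef
    have hδpos : 0 < δ := by positivity
    have h1 : ∀ᶠ n in atTop, Sd n < ε / 8 := by
      have h := Metric.tendsto_nhds.1 hSdto (ε / 8) (by positivity)
      filter_upwards [h] with n hn
      rw [Real.dist_eq, sub_zero, abs_of_nonneg (hSd0 n)] at hn
      exact hn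
    have hcomb := (hrmax δ hδpos).and (h1.and hRev)
    obtain ⟨Nb, hNb⟩ := Filter.eventually_atTop.1 hcomb
    refine ⟨Nb, fun n hn => ?_⟩
    obtain ⟨hrn, hSdn, hRn⟩ := hNb n hn
    -- bound D2 n
    have hD : D2 n ≤ ENNReal.ofReal (∑ i, 2 * (r n i * r n i))
        + ENNReal.ofReal (2 * Sd n) := by
      refine le_trans (dL1_triangle _
        (prodPoiN (fun c => (∑ i, μR strat (r n) (σ n) (tm n) i c).toNNReal)) _)
        (add_le_add ?_ ?_)
      · exact part2_dL1 strat (r n) (σ n) (tm n) (hr1 n) (hr2 n) (hσ0 n) (hσv n) (hσ1 n)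
      · refine le_trans (dL1_prodPoiN_le _ _) ?_
        have hco : ∀ c : Σ t : T, {s : Finset E // s ∈ strat t},
            ENNReal.ofReal (2 * |(((∑ i, μR strat (r n) (σ n) (tm n) i c).toNNReal : ℝ))
              - ((yN c : ℝ))|)
            = ENNReal.ofReal (2 * |(∑ i, μR strat (r n) (σ n) (tm n) i c)
              - y c.1 c.2.val|) := by
          intro c
          rw [Real.coe_toNNReal _ (Finset.sum_nonneg fun i _ =>
              μR_nonneg strat (r n) (σ n) (tm n) (hr1 n) (hσ0 n) i c),
            show (yN c : ℝ) = y c.1 c.2.val from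
              Real.coe_toNNReal _ (hy0 c.1 c.2.val c.2.property)]
        rw [Finset.sum_congr rfl (fun c _ => hco c),
          ← ENNReal.ofReal_sum_of_nonneg (fun c _ => by positivity)]
        refine ENNReal.ofReal_le_ofReal ?_
        rw [hSddef, Finset.mul_sum]
    have hb1 : (∑ i, 2 * (r n i * r n i)) ≤ 2 * (δ * C) := by
      have hper : ∀ i, 2 * (r n i * r n i) ≤ 2 * (δ * r n i) := by
        intro i
        have := hrn i
        nlinarith [(hr1 n i).le]
      calc (∑ i, 2 * (r n i * r n i)) ≤ ∑ i, 2 * (δ * r n i) :=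
            Finset.sum_le_sum fun i _ => hper i
        _ = 2 * (δ * ∑ i, r n i) := by rw [← Finset.mul_sum, ← Finset.mul_sum]
        _ ≤ 2 * (δ * C) := by nlinarith [hRn, hδpos.le]
    have hb2 : 2 * Sd n ≤ 2 * (ε / 8) := by nlinarith [hSdn]
    have hDle : D2 n ≤ ENNReal.ofReal (2 * (δ * C) + 2 * (ε / 8)) := by
      refine le_trans hD ?_
      rw [ENNReal.ofReal_add (by positivity) (by positivity)]
      refine add_le_add (ENNReal.ofReal_le_ofReal hb1) (ENNReal.ofReal_le_ofReal ?_)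
      nlinarith [hSd0 n, hSdn]
    have htr : (D2 n).toReal ≤ 2 * (δ * C) + 2 * (ε / 8) :=
      ENNReal.toReal_le_of_le_ofReal (by positivity) hDle
    have hδC : δ * C = ε / 8 := by
      rw [hδdef]
      field_simp
    rw [Real.dist_eq]
    refine lt_of_le_of_lt (le_trans (habs n) htr) ?_
    rw [hδC]
    linarith
end

section
/- In a Poisson game where player counts per type are independent N_t ~ Poisson(d_t) with d_t > 0, costs are C(Y^{-t} | t, s) = ∑_{e ∈ s} c_e(1 + X_e^{-t}) with X_e^{-t} the aggregate resource load of the other players, and costs satisfy the moment condition E[|Δ²c_e(1+V)|] < ∞ for V ~ Poisson(α), α > d_tot: a symmetric type-dependent mixed strategy profile σ = (σ_t) is an equilibrium of the Poisson game if and only if the flow-load pair (y, x) defined by y_{t,s} = d_t σ_t(s) and x_e = ∑_t ∑_{s ∈ S_t} y_{t,s} 1{e ∈ s} is a Wardrop equilibrium of the nonatomic congestion game with costs ĉ_e(x) = E[c_e(1 + Poisson(x))] and demands (d_t). -/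
open scoped BigOperators Classical
open scoped ENNReal NNReal Nat

namespace Stmt18Aux

lemma poiPMF_nonneg {x : ℝ} (hx : 0 ≤ x) (k : ℕ) : 0 ≤ poiPMF x k := by
  unfold poiPMF; positivity

lemma hasSum_poiPMF {x : ℝ} (hx : 0 ≤ x) : HasSum (poiPMF x) 1 := by
  have h := ProbabilityTheory.poissonPMFRealSum ⟨x, hx⟩
  unfold poiPMF
  exact h

noncomputable def ppoi (x : ℝ) (k : ℕ) : ℝ≥0∞ := ENNReal.ofReal (poiPMF x k)

lemma tsum_ppoi {x : ℝ} (hx : 0 ≤ x) : ∑' k, ppoi x k = 1 := by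
  unfold ppoi
  rw [← ENNReal.ofReal_tsum_of_nonneg (poiPMF_nonneg hx) (hasSum_poiPMF hx).summable,
    (hasSum_poiPMF hx).tsum_eq, ENNReal.ofReal_one]

lemma poiPMF_zero_apply (k : ℕ) : poiPMF 0 k = if k = 0 then 1 else 0 := by
  unfold poiPMF; cases k <;> simp

lemma succ_mul_poiPMF (x : ℝ) (k : ℕ) :
    ((k : ℝ) + 1) * poiPMF x (k + 1) = x * poiPMF x k := by
  unfold poiPMF
  rw [Nat.factorial_succ, pow_succ]
  push_cast
  have h1 : (k ! : ℝ) ≠ 0 := Nat.cast_ne_zero.mpr (Nat.factorial_ne_zero k)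
  have h2 : (k : ℝ) + 1 ≠ 0 := by positivity
  field_simp

lemma poiPMF_conv (a b : ℝ) (k : ℕ) :
    ∑ p ∈ Finset.HasAntidiagonal.antidiagonal k, poiPMF a p.1 * poiPMF b p.2 = poiPMF (a + b) k := by
  rw [Finset.Nat.sum_antidiagonal_eq_sum_range_succ_mk]
  have hterm : ∀ i ∈ Finset.range (k + 1),
      poiPMF a i * poiPMF b (k - i) =
        Real.exp (-(a + b)) / k ! * (a ^ i * b ^ (k - i) * (k.choose i : ℝ)) := by
    intro i hi
    have hik : i ≤ k := Nat.lt_succ_iff.mp (Finset.mem_range.mp hi)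
    have hfac : (k.choose i : ℝ) * (i ! : ℝ) * ((k - i)! : ℝ) = (k ! : ℝ) := by
      exact_mod_cast congrArg (Nat.cast (R := ℝ))
        (Nat.choose_mul_factorial_mul_factorial hik)
    have h1 : (i ! : ℝ) ≠ 0 := Nat.cast_ne_zero.mpr (Nat.factorial_ne_zero i)
    have h2 : ((k - i)! : ℝ) ≠ 0 := Nat.cast_ne_zero.mpr (Nat.factorial_ne_zero _)
    have h3 : (k ! : ℝ) ≠ 0 := Nat.cast_ne_zero.mpr (Nat.factorial_ne_zero k)
    unfold poiPMF
    rw [neg_add, Real.exp_add]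
    field_simp
    linear_combination (-1 * a ^ i * b ^ (k - i)) * hfac
  rw [Finset.sum_congr rfl hterm, ← Finset.mul_sum]
  unfold poiPMF
  rw [add_pow]
  ring


lemma ppoi_conv {a b : ℝ} (ha : 0 ≤ a) (hb : 0 ≤ b) (k : ℕ) :
    ∑ p ∈ Finset.HasAntidiagonal.antidiagonal k, ppoi a p.1 * ppoi b p.2 = ppoi (a + b) k := by
  unfold ppoi
  rw [← poiPMF_conv a b k, ENNReal.ofReal_sum_of_nonneg]
  · exact Finset.sum_congr rfl fun p _ =>
      (ENNReal.ofReal_mul (poiPMF_nonneg ha _)).symm ▸ rfl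
  · exact fun p _ => mul_nonneg (poiPMF_nonneg ha _) (poiPMF_nonneg hb _)

lemma tsum_nat_antidiagonal (F : ℕ × ℕ → ℝ≥0∞) :
    ∑' p : ℕ × ℕ, F p = ∑' n : ℕ, ∑ p ∈ Finset.HasAntidiagonal.antidiagonal n, F p := by
  rw [← Finset.HasAntidiagonal.sigmaAntidiagonalEquivProd.tsum_eq F, ENNReal.tsum_sigma']
  exact tsum_congr fun n => by
    rw [← Finset.tsum_subtype (Finset.HasAntidiagonal.antidiagonal n) F]
    exact tsum_congr fun p => rfl

universe u

lemma key : ∀ (ι : Type u) [Finite ι], ∀ (F : Fintype ι) (lam : ι → ℝ),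
    (∀ i, 0 ≤ lam i) → ∀ (b : ι → Prop) (f : ℕ → ℝ≥0∞),
    (letI := F;
      ∑' m : ι → ℕ, (∏ i, ppoi (lam i) (m i)) * f (∑ i, if b i then m i else 0) =
        ∑' k, ppoi (∑ i, if b i then lam i else 0) k * f k) := by
  intro ι _
  refine Finite.induction_empty_option
    (P := fun ι => ∀ (F : Fintype ι) (lam : ι → ℝ),
      (∀ i, 0 ≤ lam i) → ∀ (b : ι → Prop) (f : ℕ → ℝ≥0∞),
      (letI := F;
        ∑' m : ι → ℕ, (∏ i, ppoi (lam i) (m i)) * f (∑ i, if b i then m i else 0) =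
          ∑' k, ppoi (∑ i, if b i then lam i else 0) k * f k)) ?_ ?_ ?_ ι
  · -- transport along an equiv
    intro γ β e h F lam hlam b f
    letI : Fintype γ := Fintype.ofEquiv β e.symm
    have h' := h inferInstance (lam ∘ e) (fun i => hlam (e i)) (b ∘ e) f
    have hE := (Equiv.arrowCongr e (Equiv.refl ℕ)).tsum_eq
      (fun m : β → ℕ => (∏ j, ppoi (lam j) (m j)) * f (∑ j, if b j then m j else 0))
    rw [← hE]
    have hterm : ∀ mγ : γ → ℕ,
        (∏ j, ppoi (lam j) ((Equiv.arrowCongr e (Equiv.refl ℕ)) mγ j)) *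
          f (∑ j, if b j then (Equiv.arrowCongr e (Equiv.refl ℕ)) mγ j else 0) =
        (∏ i, ppoi ((lam ∘ e) i) (mγ i)) * f (∑ i, if (b ∘ e) i then mγ i else 0) := by
      intro mγ
      have hp := Equiv.prod_comp e (fun j => ppoi (lam j) (mγ (e.symm j)))
      have hs := Equiv.sum_comp e (fun j => if b j then mγ (e.symm j) else 0)
      simp only [Equiv.arrowCongr_apply, Equiv.coe_refl, Function.comp_apply, id]
      rw [← hp, ← hs]
      congr 1
      · exact Finset.prod_congr rfl fun i _ => by rw [Equiv.symm_apply_apply]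
      · congr 1
        exact Finset.sum_congr rfl fun i _ => by rw [Equiv.symm_apply_apply]
    calc ∑' mγ : γ → ℕ, (∏ j, ppoi (lam j) ((Equiv.arrowCongr e (Equiv.refl ℕ)) mγ j)) *
          f (∑ j, if b j then (Equiv.arrowCongr e (Equiv.refl ℕ)) mγ j else 0)
        = ∑' mγ : γ → ℕ, (∏ i, ppoi ((lam ∘ e) i) (mγ i)) *
            f (∑ i, if (b ∘ e) i then mγ i else 0) := tsum_congr hterm
      _ = ∑' k, ppoi (∑ i, if (b ∘ e) i then (lam ∘ e) i else 0) k * f k := h'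
      _ = ∑' k, ppoi (∑ j, if b j then lam j else 0) k * f k := by
          simp only [Function.comp_apply]
          rw [Equiv.sum_comp e (fun j => if b j then lam j else 0)]
  · -- empty case
    intro F lam hlam b f
    simp only [Finset.univ_eq_empty, Finset.prod_empty, Finset.sum_empty, one_mul]
    rw [tsum_eq_single (fun x : PEmpty => 0)
      (fun m' hm' => absurd (Subsingleton.elim m' _) hm'),
      tsum_eq_single 0 ?_]
    · rw [show ppoi 0 0 = 1 by
        unfold ppoi; rw [poiPMF_zero_apply]; simp, one_mul]
    · intro k hk
      rw [show ppoi 0 k = 0 by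
        unfold ppoi; rw [poiPMF_zero_apply, if_neg hk]; simp, zero_mul]
  · -- option case
    intro γ _ h F lam hlam b f
    obtain rfl : F = instFintypeOption := Subsingleton.elim _ _
    have hE := (Equiv.piOptionEquivProd (β := fun _ : Option γ => ℕ)).symm.tsum_eq
      (fun m : Option γ → ℕ =>
        (∏ j, ppoi (lam j) (m j)) * f (∑ j, if b j then m j else 0))
    rw [← hE, ENNReal.tsum_prod']
    have hterm : ∀ (a : ℕ) (m : γ → ℕ),
        (∏ j, ppoi (lam j) ((Equiv.piOptionEquivProd (β := fun _ : Option γ => ℕ)).symm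
            (a, m) j)) *
          f (∑ j, if b j then (Equiv.piOptionEquivProd
            (β := fun _ : Option γ => ℕ)).symm (a, m) j else 0) =
        (ppoi (lam none) a * ∏ i, ppoi (lam (some i)) (m i)) *
          f ((if b none then a else 0) + ∑ i, if b (some i) then m i else 0) := by
      intro a m
      rw [Fintype.prod_option, Fintype.sum_option]
      congr 1
    have hΛ0 : 0 ≤ ∑ i, if b (some i) then lam (some i) else 0 := by
      refine Finset.sum_nonneg fun i _ => ?_
      split
      · exact hlam _
      · exact le_rfl
    have hmean : (∑ j : Option γ, if b j then lam j else 0) =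
        (if b none then lam none else 0) + ∑ i, if b (some i) then lam (some i) else 0 :=
      Fintype.sum_option _
    rw [hmean]
    by_cases hb : b none
    · have step : ∀ a : ℕ,
          (∑' m : γ → ℕ,
            (∏ j, ppoi (lam j) ((Equiv.piOptionEquivProd (β := fun _ : Option γ => ℕ)).symm
              (a, m) j)) *
            f (∑ j, if b j then (Equiv.piOptionEquivProd
              (β := fun _ : Option γ => ℕ)).symm (a, m) j else 0)) =
          ppoi (lam none) a *
            ∑' k, ppoi (∑ i, if b (some i) then lam (some i) else 0) k * f (a + k) := by
        intro a
        rw [tsum_congr (hterm a), if_pos hb]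
        calc (∑' m : γ → ℕ, (ppoi (lam none) a * ∏ i, ppoi (lam (some i)) (m i)) *
              f (a + ∑ i, if b (some i) then m i else 0))
            = ∑' m : γ → ℕ, ppoi (lam none) a * ((∏ i, ppoi (lam (some i)) (m i)) *
              f (a + ∑ i, if b (some i) then m i else 0)) := tsum_congr fun m => by ring
          _ = ppoi (lam none) a * ∑' m : γ → ℕ, (∏ i, ppoi (lam (some i)) (m i)) *
              f (a + ∑ i, if b (some i) then m i else 0) := ENNReal.tsum_mul_left
          _ = _ := by
              rw [h inferInstance (fun i => lam (some i)) (fun i => hlam (some i))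
                (fun i => b (some i)) (fun k => f (a + k))]
      rw [tsum_congr step, if_pos hb]
      calc (∑' a, ppoi (lam none) a *
              ∑' k, ppoi (∑ i, if b (some i) then lam (some i) else 0) k * f (a + k))
          = ∑' a, ∑' k, ppoi (lam none) a *
              (ppoi (∑ i, if b (some i) then lam (some i) else 0) k * f (a + k)) :=
            tsum_congr fun a => ENNReal.tsum_mul_left.symm
        _ = ∑' p : ℕ × ℕ, ppoi (lam none) p.1 *
              (ppoi (∑ i, if b (some i) then lam (some i) else 0) p.2 * f (p.1 + p.2)) :=
            (ENNReal.tsum_prod' (f := fun p : ℕ × ℕ => ppoi (lam none) p.1 *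
              (ppoi (∑ i, if b (some i) then lam (some i) else 0) p.2 *
                f (p.1 + p.2)))).symm
        _ = ∑' n, ∑ p ∈ Finset.HasAntidiagonal.antidiagonal n, ppoi (lam none) p.1 *
              (ppoi (∑ i, if b (some i) then lam (some i) else 0) p.2 * f (p.1 + p.2)) :=
            tsum_nat_antidiagonal _
        _ = ∑' k, ppoi (lam none + ∑ i, if b (some i) then lam (some i) else 0) k * f k := by
            refine tsum_congr fun n => ?_
            have hc : ∀ p ∈ Finset.HasAntidiagonal.antidiagonal n,
                ppoi (lam none) p.1 *
                  (ppoi (∑ i, if b (some i) then lam (some i) else 0) p.2 * f (p.1 + p.2)) =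
                (ppoi (lam none) p.1 *
                  ppoi (∑ i, if b (some i) then lam (some i) else 0) p.2) * f n := by
              intro p hp
              rw [Finset.HasAntidiagonal.mem_antidiagonal] at hp
              rw [hp, mul_assoc]
            rw [Finset.sum_congr rfl hc, ← Finset.sum_mul, ppoi_conv (hlam none) hΛ0]
    · have step : ∀ a : ℕ,
          (∑' m : γ → ℕ,
            (∏ j, ppoi (lam j) ((Equiv.piOptionEquivProd (β := fun _ : Option γ => ℕ)).symm
              (a, m) j)) *
            f (∑ j, if b j then (Equiv.piOptionEquivProd
              (β := fun _ : Option γ => ℕ)).symm (a, m) j else 0)) =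
          ppoi (lam none) a *
            ∑' k, ppoi (∑ i, if b (some i) then lam (some i) else 0) k * f k := by
        intro a
        rw [tsum_congr (hterm a), if_neg hb]
        calc (∑' m : γ → ℕ, (ppoi (lam none) a * ∏ i, ppoi (lam (some i)) (m i)) *
              f (0 + ∑ i, if b (some i) then m i else 0))
            = ∑' m : γ → ℕ, ppoi (lam none) a * ((∏ i, ppoi (lam (some i)) (m i)) *
              f (∑ i, if b (some i) then m i else 0)) := tsum_congr fun m => by
                rw [zero_add]; ring
          _ = ppoi (lam none) a * ∑' m : γ → ℕ, (∏ i, ppoi (lam (some i)) (m i)) *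
              f (∑ i, if b (some i) then m i else 0) := ENNReal.tsum_mul_left
          _ = _ := by
              rw [h inferInstance (fun i => lam (some i)) (fun i => hlam (some i))
                (fun i => b (some i)) f]
      rw [tsum_congr step, if_neg hb, ENNReal.tsum_mul_right, tsum_ppoi (hlam none),
        one_mul, zero_add]


lemma summable_id_mul_poiPMF {x : ℝ} (hx : 0 ≤ x) :
    Summable fun k : ℕ => (k : ℝ) * poiPMF x k := by
  rw [← summable_nat_add_iff 1]
  have heq : (fun k : ℕ => ((k + 1 : ℕ) : ℝ) * poiPMF x (k + 1)) =
      fun k => x * poiPMF x k := by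
    funext k; push_cast; exact succ_mul_poiPMF x k
  exact heq ▸ ((hasSum_poiPMF hx).summable.mul_left x)

lemma tsum_pow_div_factorial (x : ℝ) : ∑' j : ℕ, x ^ j / j ! = Real.exp x := by
  rw [Real.exp_eq_exp_ℝ]
  exact (NormedSpace.expSeries_div_hasSum_exp x).tsum_eq

lemma summable_ite_id_mul_poiPMF {x : ℝ} (hx : 0 ≤ x) (i : ℕ) :
    Summable fun k => if i < k then (k : ℝ) * poiPMF x k else 0 := by
  have hnn : ∀ k : ℕ, 0 ≤ (k : ℝ) * poiPMF x k :=
    fun k => mul_nonneg (Nat.cast_nonneg k) (poiPMF_nonneg hx k)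
  refine Summable.of_nonneg_of_le (fun k => ?_) (fun k => ?_) (summable_id_mul_poiPMF hx)
  · split
    · exact hnn k
    · exact le_rfl
  · split
    · exact le_rfl
    · exact hnn k

lemma poiPMF_add_le {x : ℝ} (hx : 0 ≤ x) (i j : ℕ) :
    poiPMF x (j + i) ≤ (x ^ i / i !) * poiPMF x j := by
  have hfact : ((i ! * j ! : ℕ) : ℝ) ≤ (((j + i)! : ℕ) : ℝ) := by
    exact_mod_cast Nat.le_of_dvd (Nat.factorial_pos _)
      (by simpa [Nat.add_comm] using Nat.factorial_mul_factorial_dvd_factorial_add i j)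
  have hpos : (0 : ℝ) < (i ! : ℝ) * (j ! : ℝ) := by positivity
  have h1 : Real.exp (-x) * x ^ (j + i) / ((j + i)! : ℝ) ≤
      Real.exp (-x) * x ^ (j + i) / ((i ! : ℝ) * (j ! : ℝ)) := by
    apply div_le_div_of_nonneg_left _ hpos _
    · positivity
    · exact_mod_cast hfact
  have h2 : Real.exp (-x) * x ^ (j + i) / ((i ! : ℝ) * (j ! : ℝ)) =
      (x ^ i / i !) * poiPMF x j := by
    unfold poiPMF
    rw [pow_add]
    ring
  calc poiPMF x (j + i) = Real.exp (-x) * x ^ (j + i) / ((j + i)! : ℝ) := rfl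
    _ ≤ _ := h1
    _ = _ := h2

lemma tsum_tail_le {x : ℝ} (hx : 0 ≤ x) (i : ℕ) :
    ∑' k : ℕ, (if i < k then (k : ℝ) * poiPMF x k else 0) ≤ x * (x ^ i / i !) := by
  have hsm := summable_ite_id_mul_poiPMF hx i
  rw [← Summable.sum_add_tsum_nat_add (i + 1) hsm]
  have h1 : ∑ k ∈ Finset.range (i + 1), (if i < k then (k : ℝ) * poiPMF x k else 0) = 0 :=
    Finset.sum_eq_zero fun k hk => if_neg (by have := Finset.mem_range.mp hk; omega)
  rw [h1, zero_add]
  have h2 : ∀ j : ℕ,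
      (if i < j + (i + 1) then ((j + (i + 1) : ℕ) : ℝ) * poiPMF x (j + (i + 1)) else 0) =
      x * poiPMF x (j + i) := by
    intro j
    rw [if_pos (by omega)]
    have hs := succ_mul_poiPMF x (j + i)
    have hju : j + (i + 1) = (j + i) + 1 := by omega
    rw [hju]
    push_cast at hs ⊢
    exact hs
  calc (∑' j : ℕ, if i < j + (i + 1) then ((j + (i + 1) : ℕ) : ℝ) * poiPMF x (j + (i + 1)) else 0)
      = ∑' j : ℕ, x * poiPMF x (j + i) := tsum_congr h2
    _ = x * ∑' j : ℕ, poiPMF x (j + i) := tsum_mul_left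
    _ ≤ x * (x ^ i / i !) := by
        refine mul_le_mul_of_nonneg_left ?_ hx
        have hsl : Summable fun j : ℕ => poiPMF x (j + i) :=
          (summable_nat_add_iff i).mpr (hasSum_poiPMF hx).summable
        have hsr : Summable fun j : ℕ => (x ^ i / i !) * poiPMF x j :=
          (hasSum_poiPMF hx).summable.mul_left _
        calc ∑' j : ℕ, poiPMF x (j + i) ≤ ∑' j : ℕ, (x ^ i / i !) * poiPMF x j :=
              Summable.tsum_le_tsum (fun j => poiPMF_add_le hx i j) hsl hsr
          _ = (x ^ i / i !) * ∑' j : ℕ, poiPMF x j := tsum_mul_left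
          _ = x ^ i / i ! := by rw [(hasSum_poiPMF hx).tsum_eq, mul_one]

lemma summable_mul_poiPMF {a : ℕ → ℝ} (hmono : Monotone a) (hpos : ∀ k, 0 ≤ a k)
    {α x : ℝ} (hx : 0 ≤ x) (hxα : x ≤ α)
    (hu : Summable fun k => |a (k + 3) - 2 * a (k + 2) + a (k + 1)| * poiPMF α k) :
    Summable fun k => a (1 + k) * poiPMF x k := by
  have hα0 : 0 ≤ α := le_trans hx hxα
  set u : ℕ → ℝ := fun i => |a (i + 3) - 2 * a (i + 2) + a (i + 1)| with hu_def
  have hu0 : ∀ i, 0 ≤ u i := fun i => abs_nonneg _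
  set S : ℕ → ℝ := fun k => ∑ i ∈ Finset.range k, u i with hS_def
  have hS0 : ∀ k, 0 ≤ S k := fun k => Finset.sum_nonneg fun i _ => hu0 i
  have hSmono : Monotone S := fun k l hkl =>
    Finset.sum_le_sum_of_subset_of_nonneg (Finset.range_subset_range.mpr hkl) fun i _ _ => hu0 i
  have claimD : ∀ j, a (j + 2) - a (j + 1) ≤ (a 2 - a 1) + S j := by
    intro j
    induction j with
    | zero => simp [hS_def]
    | succ j ih =>
      have h2 : a (j + 3) - 2 * a (j + 2) + a (j + 1) ≤ u j := le_abs_self _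
      have h3 : S (j + 1) = S j + u j := Finset.sum_range_succ u j
      show a (j + 1 + 2) - a (j + 1 + 1) ≤ (a 2 - a 1) + S (j + 1)
      have he1 : j + 1 + 2 = j + 3 := by omega
      have he2 : j + 1 + 1 = j + 2 := by omega
      rw [he1, he2, h3]
      linarith [ih, h2]
  have boundA : ∀ k : ℕ, a (1 + k) ≤ a 1 + (k : ℝ) * (a 2 - a 1) + (k : ℝ) * S k := by
    intro k
    induction k with
    | zero => simp
    | succ k ih =>
      have hd : a (1 + (k + 1)) - a (1 + k) ≤ (a 2 - a 1) + S k := by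
        have hc := claimD k
        have he1 : 1 + (k + 1) = k + 2 := by omega
        have he2 : 1 + k = k + 1 := by omega
        rw [he1, he2]
        exact hc
      have hS1 : S k ≤ S (k + 1) := hSmono (Nat.le_succ k)
      have hD1 : 0 ≤ a 2 - a 1 := sub_nonneg.mpr (hmono (by norm_num))
      have hk0 : (0 : ℝ) ≤ (k : ℝ) := Nat.cast_nonneg k
      push_cast
      push_cast at ih
      nlinarith [ih, hd, hS1, hS0 k, hS0 (k + 1)]
  -- the difficult summand
  have e3 : Summable fun k : ℕ => (k : ℝ) * S k * poiPMF x k := by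
    set g : ℕ × ℕ → ℝ :=
      fun p => if p.1 < p.2 then (p.2 : ℝ) * u p.1 * poiPMF x p.2 else 0 with hg_def
    have g0 : ∀ p, 0 ≤ g p := by
      intro p
      simp only [hg_def]
      split
      · exact mul_nonneg (mul_nonneg (Nat.cast_nonneg _) (hu0 _)) (poiPMF_nonneg hx _)
      · exact le_rfl
    have hsec : ∀ i, Summable fun k => g (i, k) := by
      intro i
      have heq : (fun k : ℕ => g (i, k)) =
          fun k : ℕ => u i * (if i < k then (k : ℝ) * poiPMF x k else 0) := by
        funext k
        show (if i < k then (k : ℝ) * u i * poiPMF x k else 0) =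
          u i * (if i < k then (k : ℝ) * poiPMF x k else 0)
        by_cases h : i < k
        · rw [if_pos h, if_pos h]; ring
        · rw [if_neg h, if_neg h, mul_zero]
      rw [heq]
      exact (summable_ite_id_mul_poiPMF hx i).mul_left _
    have hmarg : Summable fun i => ∑' k, g (i, k) := by
      refine Summable.of_nonneg_of_le (fun i => tsum_nonneg fun k => g0 _)
        (fun i => ?_) (hu.mul_left (x * Real.exp α))
      have heq : (fun k : ℕ => g (i, k)) =
          fun k : ℕ => u i * (if i < k then (k : ℝ) * poiPMF x k else 0) := by
        funext k
        show (if i < k then (k : ℝ) * u i * poiPMF x k else 0) =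
          u i * (if i < k then (k : ℝ) * poiPMF x k else 0)
        by_cases h : i < k
        · rw [if_pos h, if_pos h]; ring
        · rw [if_neg h, if_neg h, mul_zero]
      rw [heq, tsum_mul_left]
      have hb1 : ∑' k, (if i < k then (k : ℝ) * poiPMF x k else 0) ≤ x * (x ^ i / i !) :=
        tsum_tail_le hx i
      have hb2 : x * (x ^ i / i !) ≤ x * (Real.exp α * poiPMF α i) := by
        refine mul_le_mul_of_nonneg_left ?_ hx
        unfold poiPMF
        have hxi : x ^ i ≤ α ^ i := pow_le_pow_left₀ hx hxα i
        have h5 : Real.exp α * (Real.exp (-α) * α ^ i / (i ! : ℝ)) = α ^ i / i ! := by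
          rw [mul_div_assoc', ← mul_assoc, ← Real.exp_add]
          simp
        rw [h5]
        gcongr
      calc u i * ∑' k, (if i < k then (k : ℝ) * poiPMF x k else 0)
          ≤ u i * (x * (Real.exp α * poiPMF α i)) := by
            refine mul_le_mul_of_nonneg_left (le_trans hb1 hb2) (hu0 i)
        _ = x * Real.exp α * (u i * poiPMF α i) := by ring
    have hg : Summable g := (summable_prod_of_nonneg g0).mpr ⟨hsec, hmarg⟩
    have hswap : Summable fun p : ℕ × ℕ => g (p.2, p.1) := by
      have := (Equiv.prodComm ℕ ℕ).summable_iff (f := g)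
      exact this.mpr hg
    have hm2 := ((summable_prod_of_nonneg (fun p => g0 (p.2, p.1))).mp hswap).2
    have hm2' : Summable fun k : ℕ => ∑' i : ℕ, g (i, k) := hm2
    have heq : ∀ k : ℕ, (∑' i : ℕ, g (i, k)) = (k : ℝ) * S k * poiPMF x k := by
      intro k
      have hz : ∀ i ∉ Finset.range k, g (i, k) = 0 := by
        intro i hi
        have hik : ¬ i < k := fun hc => hi (Finset.mem_range.mpr hc)
        show (if i < k then (k : ℝ) * u i * poiPMF x k else 0) = 0
        exact if_neg hik
      rw [tsum_eq_sum hz]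
      have hc : ∀ i ∈ Finset.range k, g (i, k) = (k : ℝ) * poiPMF x k * u i := by
        intro i hi
        show (if i < k then (k : ℝ) * u i * poiPMF x k else 0) = (k : ℝ) * poiPMF x k * u i
        rw [if_pos (Finset.mem_range.mp hi)]
        ring
      rw [Finset.sum_congr rfl hc, ← Finset.mul_sum]
      have hSk : S k = ∑ i ∈ Finset.range k, u i := rfl
      rw [hSk]
      ring
    have heq2 : (fun k : ℕ => ∑' i : ℕ, g (i, k)) =
        fun k : ℕ => (k : ℝ) * S k * poiPMF x k := funext heq
    rwa [heq2] at hm2'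
  have e1 : Summable fun k : ℕ => a 1 * poiPMF x k := (hasSum_poiPMF hx).summable.mul_left _
  have e2 : Summable fun k : ℕ => (a 2 - a 1) * ((k : ℝ) * poiPMF x k) :=
    (summable_id_mul_poiPMF hx).mul_left _
  refine Summable.of_nonneg_of_le (fun k => mul_nonneg (hpos _) (poiPMF_nonneg hx _))
    (fun k => mul_le_mul_of_nonneg_right (boundA k) (poiPMF_nonneg hx k)) ?_
  have heq : (fun k : ℕ => (a 1 + (k : ℝ) * (a 2 - a 1) + (k : ℝ) * S k) * poiPMF x k) =
      fun k => (a 1 * poiPMF x k + (a 2 - a 1) * ((k : ℝ) * poiPMF x k)) +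
        (k : ℝ) * S k * poiPMF x k := funext fun k => by ring
  rw [heq]
  exact (e1.add e2).add e3

end Stmt18Aux

section Defs

variable {E T : Type*}

/-- Joint pmf of independent Poisson strategy flows with means `y t s`. -/
noncomputable def jointPoi [Fintype E] [Fintype T] (y : T → Finset E → ℝ)
    (m : T → Finset E → ℕ) : ℝ :=
  ∏ t, ∏ s : Finset E, poiPMF (y t s) (m t s)

/-- The resource load induced by the strategy flows `m`. -/
noncomputable def loadOf [Fintype E] [Fintype T] (strat : T → Finset (Finset E))
    (m : T → Finset E → ℕ) (e : E) : ℕ :=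
  ∑ t, ∑ s ∈ strat t, if e ∈ s then m t s else 0

/-- Expected cost of a player of type `t` choosing strategy `s` in the Poisson game: the other
players' strategy flows are independent Poisson with means `y`, and the player pays
`∑_{e ∈ s} c_e(1 + X_e^{-t})` where `X_e^{-t}` is the aggregate load of the others. -/
noncomputable def poiExpCost [Fintype E] [Fintype T] (strat : T → Finset (Finset E))
    (c : E → ℕ → ℝ) (y : T → Finset E → ℝ) (s : Finset E) : ℝ :=
  ∑' m : T → Finset E → ℕ, jointPoi y m * ∑ e ∈ s, c e (1 + loadOf strat m e)

/-- The auxiliary cost `ĉ(x) = E[c(1 + X)]`, `X ~ Poisson(x)`. -/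
noncomputable def chat (c : ℕ → ℝ) (x : ℝ) : ℝ := ∑' k : ℕ, c (1 + k) * poiPMF x k

def Feasible [Fintype E] [Fintype T] (strat : T → Finset (Finset E)) (d : T → ℝ)
    (y : T → Finset E → ℝ) (x : E → ℝ) : Prop :=
  (∀ t s, 0 ≤ y t s) ∧ (∀ t s, s ∉ strat t → y t s = 0) ∧
  (∀ t, d t = ∑ s ∈ strat t, y t s) ∧
  (∀ e, x e = ∑ t, ∑ s ∈ strat t, if e ∈ s then y t s else 0)

def IsWE [Fintype E] [Fintype T] (strat : T → Finset (Finset E)) (c : E → ℝ → ℝ)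
    (d : T → ℝ) (y : T → Finset E → ℝ) (x : E → ℝ) : Prop :=
  Feasible strat d y x ∧
  ∀ t, ∀ s ∈ strat t, ∀ s' ∈ strat t, 0 < y t s →
    ∑ e ∈ s, c e (x e) ≤ ∑ e ∈ s', c e (x e)

end Defs


namespace Stmt18Aux

section Game

variable {E T : Type*} [Fintype E] [Fintype T]

lemma key' {ι : Type*} [F : Fintype ι] (lam : ι → ℝ) (hlam : ∀ i, 0 ≤ lam i)
    (b : ι → Prop) (f : ℕ → ℝ≥0∞) :
    ∑' m : ι → ℕ, (∏ i, ppoi (lam i) (m i)) * f (∑ i, if b i then m i else 0) =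
      ∑' k, ppoi (∑ i, if b i then lam i else 0) k * f k :=
  key ι F lam hlam b f

lemma sum_cond_eq {M : Type*} [AddCommMonoid M] (strat : T → Finset (Finset E)) (e : E)
    (v : T → Finset E → M) :
    (∑ p : T × Finset E, if p.2 ∈ strat p.1 ∧ e ∈ p.2 then v p.1 p.2 else 0) =
      ∑ t, ∑ s ∈ strat t, if e ∈ s then v t s else 0 := by
  classical
  rw [Fintype.sum_prod_type]
  refine Finset.sum_congr rfl fun t _ => ?_
  have h1 : (∑ s ∈ strat t, if e ∈ s then v t s else 0) =
      ∑ s : Finset E, if s ∈ strat t then (if e ∈ s then v t s else 0) else 0 := by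
    rw [Finset.sum_ite_mem, Finset.univ_inter]
  rw [h1]
  exact Finset.sum_congr rfl fun s _ => by
    by_cases h1 : s ∈ strat t <;> by_cases h2 : e ∈ s <;> simp [h1, h2]

lemma jointPoi_nonneg (y : T → Finset E → ℝ) (hy : ∀ t s, 0 ≤ y t s)
    (m : T → Finset E → ℕ) : 0 ≤ jointPoi y m :=
  Finset.prod_nonneg fun t _ => Finset.prod_nonneg fun s _ => poiPMF_nonneg (hy t s) _

lemma load_tsum (strat : T → Finset (Finset E)) (y : T → Finset E → ℝ)
    (hy : ∀ t s, 0 ≤ y t s) (e : E) (g : ℕ → ℝ≥0∞) :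
    ∑' m : T → Finset E → ℕ, ENNReal.ofReal (jointPoi y m) * g (loadOf strat m e) =
      ∑' k, ppoi (∑ t, ∑ s ∈ strat t, if e ∈ s then y t s else 0) k * g k := by
  classical
  have hcur := (Equiv.curry T (Finset E) ℕ).tsum_eq
    (fun m : T → Finset E → ℕ => ENNReal.ofReal (jointPoi y m) * g (loadOf strat m e))
  rw [← hcur]
  have hterm : ∀ m' : T × Finset E → ℕ,
      ENNReal.ofReal (jointPoi y (Equiv.curry T (Finset E) ℕ m')) *
        g (loadOf strat (Equiv.curry T (Finset E) ℕ m') e) =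
      (∏ p : T × Finset E, ppoi (y p.1 p.2) (m' p)) *
        g (∑ p : T × Finset E, if p.2 ∈ strat p.1 ∧ e ∈ p.2 then m' p else 0) := by
    intro m'
    have hprod : ENNReal.ofReal (jointPoi y (Equiv.curry T (Finset E) ℕ m')) =
        ∏ p : T × Finset E, ppoi (y p.1 p.2) (m' p) := by
      unfold jointPoi
      rw [ENNReal.ofReal_prod_of_nonneg
        (fun t _ => Finset.prod_nonneg fun s _ => poiPMF_nonneg (hy t s) _),
        Fintype.prod_prod_type (fun p : T × Finset E => ppoi (y p.1 p.2) (m' p))]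
      refine Finset.prod_congr rfl fun t _ => ?_
      rw [ENNReal.ofReal_prod_of_nonneg (fun s _ => poiPMF_nonneg (hy t s) _)]
      rfl
    have hload : loadOf strat (Equiv.curry T (Finset E) ℕ m') e =
        ∑ p : T × Finset E, if p.2 ∈ strat p.1 ∧ e ∈ p.2 then m' p else 0 := by
      rw [sum_cond_eq strat e (fun t s => m' (t, s))]
      rfl
    rw [hprod, hload]
  refine (tsum_congr hterm).trans ?_
  have hk := key' (fun p : T × Finset E => y p.1 p.2) (fun p => hy p.1 p.2)
    (fun p => p.2 ∈ strat p.1 ∧ e ∈ p.2) g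
  refine Eq.trans (Eq.trans ?_ hk) ?_
  · refine tsum_congr fun m => ?_
    congr 1
    congr 1
    exact Finset.sum_congr rfl fun p _ => by congr 1
  · refine tsum_congr fun k => ?_
    congr 2
    exact Eq.trans (Finset.sum_congr rfl fun p _ => by congr 1)
      (sum_cond_eq strat e y)

lemma real_tsum_eq {ι : Type*} (f : ι → ℝ) (hf : ∀ i, 0 ≤ f i)
    (h : (∑' i, ENNReal.ofReal (f i)) ≠ ⊤) :
    ∑' i, f i = (∑' i, ENNReal.ofReal (f i)).toReal := by
  have hs := ENNReal.summable_toReal h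
  simp_rw [ENNReal.toReal_ofReal (hf _)] at hs
  rw [← ENNReal.ofReal_tsum_of_nonneg hf hs, ENNReal.toReal_ofReal (tsum_nonneg hf)]

lemma poiExpCost_eq (strat : T → Finset (Finset E)) (c : E → ℕ → ℝ)
    (hcpos : ∀ e k, 0 ≤ c e k) (y : T → Finset E → ℝ) (hy : ∀ t s, 0 ≤ y t s)
    (hsum : ∀ e : E, Summable fun k => c e (1 + k) *
      poiPMF (∑ t, ∑ s' ∈ strat t, if e ∈ s' then y t s' else 0) k)
    (s : Finset E) :
    poiExpCost strat c y s =
      ∑ e ∈ s, chat (c e) (∑ t, ∑ s' ∈ strat t, if e ∈ s' then y t s' else 0) := by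
  classical
  set x : E → ℝ := fun e => ∑ t, ∑ s' ∈ strat t, if e ∈ s' then y t s' else 0 with hx_def
  have hx0 : ∀ e, 0 ≤ x e := by
    intro e
    refine Finset.sum_nonneg fun t _ => Finset.sum_nonneg fun s' _ => ?_
    split
    · exact hy t s'
    · exact le_rfl
  have hchat : ∀ e : E, (∑' k, ppoi (x e) k * ENNReal.ofReal (c e (1 + k))) =
      ENNReal.ofReal (chat (c e) (x e)) := by
    intro e
    unfold chat
    rw [ENNReal.ofReal_tsum_of_nonneg
      (fun k => mul_nonneg (hcpos e _) (poiPMF_nonneg (hx0 e) k)) (hsum e)]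
    refine tsum_congr fun k => ?_
    rw [ENNReal.ofReal_mul (hcpos e _)]
    exact mul_comm _ _
  have hENN : (∑' m : T → Finset E → ℕ, ENNReal.ofReal (jointPoi y m *
        ∑ e ∈ s, c e (1 + loadOf strat m e))) =
      ∑ e ∈ s, ENNReal.ofReal (chat (c e) (x e)) := by
    calc (∑' m : T → Finset E → ℕ, ENNReal.ofReal (jointPoi y m *
            ∑ e ∈ s, c e (1 + loadOf strat m e)))
        = ∑' m : T → Finset E → ℕ, ∑ e ∈ s, ENNReal.ofReal (jointPoi y m) *
            ENNReal.ofReal (c e (1 + loadOf strat m e)) := by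
          refine tsum_congr fun m => ?_
          rw [ENNReal.ofReal_mul (jointPoi_nonneg y hy m),
            ENNReal.ofReal_sum_of_nonneg (fun e _ => hcpos e _), Finset.mul_sum]
      _ = ∑ e ∈ s, ∑' m : T → Finset E → ℕ, ENNReal.ofReal (jointPoi y m) *
            ENNReal.ofReal (c e (1 + loadOf strat m e)) :=
          Summable.tsum_finsetSum fun e _ => ENNReal.summable
      _ = ∑ e ∈ s, ∑' k, ppoi (x e) k * ENNReal.ofReal (c e (1 + k)) :=
          Finset.sum_congr rfl fun e _ =>
            load_tsum strat y hy e (fun n => ENNReal.ofReal (c e (1 + n)))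
      _ = ∑ e ∈ s, ENNReal.ofReal (chat (c e) (x e)) :=
          Finset.sum_congr rfl fun e _ => hchat e
  have hne : (∑' m : T → Finset E → ℕ, ENNReal.ofReal (jointPoi y m *
      ∑ e ∈ s, c e (1 + loadOf strat m e))) ≠ ⊤ := by
    rw [hENN]
    exact (ENNReal.sum_lt_top.mpr fun e _ => ENNReal.ofReal_lt_top).ne
  have hnn : ∀ m : T → Finset E → ℕ,
      0 ≤ jointPoi y m * ∑ e ∈ s, c e (1 + loadOf strat m e) := fun m =>
    mul_nonneg (jointPoi_nonneg y hy m) (Finset.sum_nonneg fun e _ => hcpos e _)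
  unfold poiExpCost
  rw [real_tsum_eq _ hnn hne, hENN, ENNReal.toReal_sum fun e _ => ENNReal.ofReal_ne_top]
  exact Finset.sum_congr rfl fun e _ => ENNReal.toReal_ofReal
    (tsum_nonneg fun k => mul_nonneg (hcpos e _) (poiPMF_nonneg (hx0 e) k))

end Game

end Stmt18Aux

/-- Correspondence between Poisson games and Wardrop equilibria: a symmetric type-dependent
mixed strategy profile `σt` is an equilibrium of the Poisson game (with independent
`Poisson(d t)` player counts and costs `∑_{e ∈ s} c_e(1 + X_e^{-t})`) if and only if the
flow-load pair given by `y t s = d t · σt t s` is a Wardrop equilibrium of the nonatomic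
congestion game with the auxiliary costs `ĉ_e(x) = E[c_e(1 + Poisson(x))]` and demands `d`. -/
theorem stmt18 {E T : Type*} [Fintype E] [Fintype T]
    (strat : T → Finset (Finset E))
    (c : E → ℕ → ℝ) (hcmono : ∀ e, Monotone (c e)) (hcpos : ∀ e k, 0 ≤ c e k)
    (d : T → ℝ) (hd : ∀ t, 0 < d t)
    (α : ℝ) (hα : ∑ t, d t < α)
    (hmom : ∀ e, Summable fun k =>
      |c e (k + 3) - 2 * c e (k + 2) + c e (k + 1)| * poiPMF α k)
    (σt : T → Finset E → ℝ) (hσ0 : ∀ t s, 0 ≤ σt t s)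
    (hσsupp : ∀ t s, s ∉ strat t → σt t s = 0)
    (hσ1 : ∀ t, ∑ s ∈ strat t, σt t s = 1) :
    (∀ t, ∀ s ∈ strat t, ∀ s' ∈ strat t, 0 < σt t s →
      poiExpCost strat c (fun t' s' => d t' * σt t' s') s ≤
        poiExpCost strat c (fun t' s' => d t' * σt t' s') s') ↔
    IsWE strat (fun e => chat (c e)) d (fun t s => d t * σt t s)
      (fun e => ∑ t, ∑ s ∈ strat t, if e ∈ s then d t * σt t s else 0) := by
  classical
  have hy0 : ∀ t s, 0 ≤ d t * σt t s := fun t s => mul_nonneg (hd t).le (hσ0 t s)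
  have hα0 : 0 ≤ α := le_trans (Finset.sum_nonneg fun t _ => (hd t).le) hα.le
  have hx0 : ∀ e : E, 0 ≤ ∑ t, ∑ s' ∈ strat t, if e ∈ s' then d t * σt t s' else 0 := by
    intro e
    refine Finset.sum_nonneg fun t _ => Finset.sum_nonneg fun s' _ => ?_
    split
    · exact hy0 t s'
    · exact le_rfl
  have hxle : ∀ e : E, (∑ t, ∑ s' ∈ strat t, if e ∈ s' then d t * σt t s' else 0) ≤ α := by
    intro e
    have h1 : ∀ t ∈ (Finset.univ : Finset T),
        (∑ s' ∈ strat t, if e ∈ s' then d t * σt t s' else 0) ≤ d t := by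
      intro t _
      calc (∑ s' ∈ strat t, if e ∈ s' then d t * σt t s' else 0)
          ≤ ∑ s' ∈ strat t, d t * σt t s' := by
            refine Finset.sum_le_sum fun s' _ => ?_
            split
            · exact le_rfl
            · exact hy0 t s'
        _ = d t * ∑ s' ∈ strat t, σt t s' := (Finset.mul_sum _ _ _).symm
        _ = d t := by rw [hσ1 t, mul_one]
    calc (∑ t, ∑ s' ∈ strat t, if e ∈ s' then d t * σt t s' else 0)
        ≤ ∑ t, d t := Finset.sum_le_sum h1
      _ ≤ α := hα.le
  have hsum : ∀ e : E, Summable fun k => c e (1 + k) *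
      poiPMF (∑ t, ∑ s' ∈ strat t, if e ∈ s' then d t * σt t s' else 0) k := fun e =>
    Stmt18Aux.summable_mul_poiPMF (hcmono e) (hcpos e) (hx0 e) (hxle e) (hmom e)
  have hcost : ∀ s0 : Finset E, poiExpCost strat c (fun t' s' => d t' * σt t' s') s0 =
      ∑ e ∈ s0, chat (c e)
        (∑ t, ∑ s' ∈ strat t, if e ∈ s' then d t * σt t s' else 0) :=
    Stmt18Aux.poiExpCost_eq strat c hcpos _ hy0 hsum
  constructor
  · intro h
    refine ⟨⟨hy0, fun t s hs => by
        show d t * σt t s = 0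
        rw [hσsupp t s hs, mul_zero], fun t => ?_, fun e => rfl⟩, ?_⟩
    · show d t = ∑ s ∈ strat t, d t * σt t s
      rw [← Finset.mul_sum, hσ1, mul_one]
    · intro t s hs s' hs' hys
      have hys' : 0 < d t * σt t s := hys
      have hne : σt t s ≠ 0 := by
        intro h0
        rw [h0, mul_zero] at hys'
        exact lt_irrefl 0 hys'
      have hσs : 0 < σt t s := (hσ0 t s).lt_of_ne (Ne.symm hne)
      have h2 := h t s hs s' hs' hσs
      rw [hcost s, hcost s'] at h2
      exact h2
  · rintro ⟨-, hwe⟩ t s hs s' hs' hσs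
    rw [hcost s, hcost s']
    exact hwe t s hs s' hs' (mul_pos (hd t) hσs)
end
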